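/- arXiv:1205.4155 — 5 statements merged into one kernel-verified Lean document; each statement's English description precedes it below -/
import Mathlib

section
/- Let h be a homeomorphism of the Cantor space such that for every m ∈ ℕ there is a partition P_m of mesh < 1/m each of whose components in Γ(h,P_m) is a dumbbell. Then h has no Li–Yorke pair; that is, there is no pair (σ,τ) of points with liminf_{n→∞} d(hⁿ(σ),hⁿ(τ)) = 0 and limsup_{n→∞} d(hⁿ(σ),hⁿ(τ)) > 0. -/
noncomputable def cantorDist (σ τ : ℕ → Bool) : ℝ :=
  letI := Classical.propDecidable (∃ n, σ n ≠ τ n)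
  if h : ∃ n, σ n ≠ τ n then 1 / (Nat.find h + 1) else 0

def IsPartition (P : Finset (Set (ℕ → Bool))) : Prop :=
  (∀ a ∈ P, IsClopen a ∧ a.Nonempty) ∧
  (∀ a ∈ P, ∀ b ∈ P, a ≠ b → Disjoint a b) ∧
  ⋃₀ (P : Set (Set (ℕ → Bool))) = Set.univ

noncomputable def cantorDiam (A : Set (ℕ → Bool)) : ℝ :=
  sSup {r | ∃ σ ∈ A, ∃ τ ∈ A, r = cantorDist σ τ}

noncomputable def mesh (C : Set (Set (ℕ → Bool))) : ℝ :=
  sSup (cantorDiam '' C)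

def gammaEdge (f : (ℕ → Bool) → (ℕ → Bool)) (a b : Set (ℕ → Bool)) : Prop :=
  (f '' a ∩ b).Nonempty

def balloonEdge (s m : ℕ) (a b : Fin (s + m)) : Prop :=
  b.val = a.val + 1 ∨ (a.val = s + m - 1 ∧ b.val = s)

def dumbbellEdge (r s t : ℕ) (a b : Fin (r + s + t)) : Prop :=
  (b.val = a.val + 1 ∧ a.val + 1 ≠ r) ∨
  (a.val = r - 1 ∧ b.val = 0) ∨
  (a.val = 0 ∧ b.val = r) ∨
  (a.val = r + s + t - 1 ∧ b.val = r + s)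

/-- Every component of `Γ(h,P)` is a dumbbell. -/
def AllComponentsDumbbells (h : (ℕ → Bool) → (ℕ → Bool))
    (P : Finset (Set (ℕ → Bool))) : Prop :=
  ∃ (k : ℕ) (r s t : Fin k → ℕ),
    (∀ i, 0 < r i) ∧ (∀ i, 0 < s i) ∧ (∀ i, 0 < t i) ∧
    ∃ e : {a // a ∈ P} ≃ (Σ i : Fin k, Fin (r i + s i + t i)),
      ∀ a b : {a // a ∈ P}, gammaEdge h a.val b.val ↔
        ∃ heq : (e a).1 = (e b).1,
          dumbbellEdge (r (e b).1) (s (e b).1) (t (e b).1)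
            (Fin.cast (by rw [heq]) (e a).2) (e b).2

/-! ### Auxiliary lemmas -/

section Aux

/-- The edge relation on natural-number values. -/
def nEdge (r s t a b : ℕ) : Prop :=
  (b = a + 1 ∧ a + 1 ≠ r) ∨ (a = r - 1 ∧ b = 0) ∨
  (a = 0 ∧ b = r) ∨ (a = r + s + t - 1 ∧ b = r + s)

lemma dumbbellEdge_iff_nEdge (r s t : ℕ) (a b : Fin (r + s + t)) :
    dumbbellEdge r s t a b ↔ nEdge r s t a.val b.val := Iff.rfl

lemma nEdge_unique {r s t a b b' : ℕ} (hr : 0 < r) (hs : 0 < s) (ht : 0 < t)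
    (ha : a ≠ 0) (hb : b < r + s + t) (hb' : b' < r + s + t)
    (h1 : nEdge r s t a b) (h2 : nEdge r s t a b') : b = b' := by
  unfold nEdge at h1 h2; omega

lemma nEdge_merge {r s t a b c : ℕ} (hr : 0 < r) (hs : 0 < s) (ht : 0 < t)
    (hab : a ≠ b) (h1 : nEdge r s t a c) (h2 : nEdge r s t b c) : r ≤ c := by
  unfold nEdge at h1 h2; omega

lemma nEdge_persist {r s t a b : ℕ} (hr : 0 < r) (hs : 0 < s) (ht : 0 < t)
    (ha : r ≤ a) (hb : b < r + s + t) (h : nEdge r s t a b) : r ≤ b := by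
  unfold nEdge at h; omega

/-- After a merge, the two trajectories agree forever. -/
lemma merge_forever {r s t : ℕ} (hr : 0 < r) (hs : 0 < s) (ht : 0 < t)
    (x y : ℕ → ℕ) (hxb : ∀ n, x n < r + s + t) (hyb : ∀ n, y n < r + s + t)
    (hx : ∀ n, nEdge r s t (x n) (x (n + 1))) (hy : ∀ n, nEdge r s t (y n) (y (n + 1)))
    {n : ℕ} (hne : x n ≠ y n) (heq : x (n + 1) = y (n + 1)) :
    ∀ m, n + 1 ≤ m → x m = y m := by
  have key : ∀ m, n + 1 ≤ m → x m = y m ∧ r ≤ x m := by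
    intro m hm
    induction m with
    | zero => omega
    | succ k ih =>
      rcases Nat.lt_or_ge k (n + 1) with hk | hk
      · have hkn : k = n := by omega
        subst hkn
        refine ⟨heq, ?_⟩
        have h2 := hy k
        rw [← heq] at h2
        exact nEdge_merge hr hs ht hne (hx k) h2
      · obtain ⟨hkeq, hkr⟩ := ih (by omega)
        have h2 := hy k
        rw [← hkeq] at h2
        have heq' : x (k + 1) = y (k + 1) :=
          nEdge_unique hr hs ht (by omega) (hxb _) (hyb _) (hx k) h2
        exact ⟨heq', nEdge_persist hr hs ht hkr (hxb _) (hx k)⟩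
  exact fun m hm => (key m hm).1

/-- The key combinatorial fact: two trajectories in a dumbbell cannot be
equal infinitely often and distinct infinitely often. -/
lemma nat_key {r s t : ℕ} (hr : 0 < r) (hs : 0 < s) (ht : 0 < t)
    (x y : ℕ → ℕ) (hxb : ∀ n, x n < r + s + t) (hyb : ∀ n, y n < r + s + t)
    (hx : ∀ n, nEdge r s t (x n) (x (n + 1))) (hy : ∀ n, nEdge r s t (y n) (y (n + 1)))
    (h1 : ∀ N, ∃ n, N ≤ n ∧ x n = y n) (h2 : ∀ N, ∃ n, N ≤ n ∧ x n ≠ y n) : False := by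
  classical
  obtain ⟨n₁, -, hne₁⟩ := h2 0
  obtain ⟨n₂, hn₂, heq₂⟩ := h1 (n₁ + 1)
  have hex : ∃ m, n₁ < m ∧ x m = y m := ⟨n₂, by omega, heq₂⟩
  set k := Nat.find hex with hk
  obtain ⟨hk1, hk2⟩ := Nat.find_spec hex
  have hkpred : x (k - 1) ≠ y (k - 1) := by
    rcases Nat.lt_or_ge n₁ (k - 1) with hc | hc
    · intro hcon
      exact Nat.find_min hex (m := k - 1) (by omega) ⟨hc, hcon⟩
    · have : k - 1 = n₁ := by omega
      rw [this]; exact hne₁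
  have hks : k - 1 + 1 = k := by omega
  have hall := merge_forever hr hs ht x y hxb hyb hx hy hkpred (by rw [hks]; exact hk2)
  obtain ⟨m, hm, hnem⟩ := h2 k
  exact hnem (hall m (by omega))

/-! ### cantorDist lemmas -/

lemma cantorDist_nonneg (σ τ : ℕ → Bool) : 0 ≤ cantorDist σ τ := by
  unfold cantorDist
  split
  · positivity
  · exact le_refl 0

lemma cantorDist_le_one (σ τ : ℕ → Bool) : cantorDist σ τ ≤ 1 := by
  unfold cantorDist
  split
  · rw [div_le_one (by positivity)]
    have : (0:ℝ) ≤ (Nat.find ‹_› : ℝ) := Nat.cast_nonneg _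
    linarith
  · norm_num

lemma cantorDist_ge {σ τ : ℕ → Bool} {N : ℕ} (h : ∃ i, i < N ∧ σ i ≠ τ i) :
    1 / ((N : ℝ) + 1) ≤ cantorDist σ τ := by
  classical
  obtain ⟨i, hiN, hi⟩ := h
  have hex : ∃ n, σ n ≠ τ n := ⟨i, hi⟩
  unfold cantorDist
  rw [dif_pos hex]
  have hfind : Nat.find hex ≤ i := Nat.find_min' hex hi
  apply one_div_le_one_div_of_le (by positivity)
  have : (Nat.find hex : ℝ) ≤ (N : ℝ) := by exact_mod_cast by omega
  linarith

/-- Membership in a clopen subset of Cantor space is determined by finitely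
many coordinates. -/
lemma clopen_determined {a : Set (ℕ → Bool)} (ha : IsClopen a) :
    ∃ N, ∀ x ∈ a, ∀ y : ℕ → Bool, (∀ i < N, x i = y i) → y ∈ a := by
  classical
  have hloc : ∀ x : {z // z ∈ a}, ∃ N, ∀ y : ℕ → Bool,
      (∀ i < N, x.val i = y i) → y ∈ a := by
    rintro ⟨x, hx⟩
    obtain ⟨I, u, hu, hsub⟩ := (isOpen_pi_iff.mp ha.isOpen) x hx
    refine ⟨(I.sup id) + 1, fun y hy => hsub ?_⟩
    intro i hi
    have : y i = x i := (hy i (by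
      have : i ≤ I.sup id := Finset.le_sup (f := id) hi
      omega)).symm
    rw [this]; exact (hu i hi).2
  choose f hf using hloc
  have hcomp : IsCompact a := ha.isClosed.isCompact
  have hcover : a ⊆ ⋃ z : {z // z ∈ a}, {y : ℕ → Bool | ∀ i < f z, z.val i = y i} := by
    intro x hx
    exact Set.mem_iUnion.mpr ⟨⟨x, hx⟩, fun i _ => rfl⟩
  have hopen : ∀ z : {z // z ∈ a}, IsOpen {y : ℕ → Bool | ∀ i < f z, z.val i = y i} := by
    intro z
    have : {y : ℕ → Bool | ∀ i < f z, z.val i = y i} =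
        ⋂ i ∈ Finset.range (f z), (fun y : ℕ → Bool => y i) ⁻¹' {z.val i} := by
      ext y
      simp [Set.mem_iInter, eq_comm]
    rw [this]
    exact isOpen_biInter_finset fun i _ =>
      (continuous_apply i).isOpen_preimage _ (isOpen_discrete _)
  obtain ⟨T, hT⟩ := hcomp.elim_finite_subcover _ hopen hcover
  refine ⟨T.sup f, fun x hx y hy => ?_⟩
  obtain ⟨z, hzT, hz⟩ : ∃ z ∈ T, ∀ i < f z, z.val i = x i := by
    have := hT hx
    rw [Set.mem_iUnion₂] at this
    obtain ⟨z, hzT, hz⟩ := this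
    exact ⟨z, hzT, hz⟩
  apply hf z
  intro i hi
  have hiT : i < T.sup f := lt_of_lt_of_le hi (Finset.le_sup hzT)
  calc z.val i = x i := hz i hi
    _ = y i := hy i hiT


lemma sigma_comp_eq {k : ℕ} (r s t : Fin k → ℕ)
    (a b : Σ j : Fin k, Fin (r j + s j + t j))
    (hE : ∃ heq : a.1 = b.1, dumbbellEdge (r b.1) (s b.1) (t b.1)
      (Fin.cast (by rw [heq]) a.2) b.2) : a.1 = b.1 := hE.1

lemma sigma_edge_transfer {k : ℕ} (r s t : Fin k → ℕ) (i : Fin k)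
    (a b : Σ j : Fin k, Fin (r j + s j + t j)) (hai : a.1 = i) (hbi : b.1 = i)
    (hE : ∃ heq : a.1 = b.1, dumbbellEdge (r b.1) (s b.1) (t b.1)
      (Fin.cast (by rw [heq]) a.2) b.2) :
    nEdge (r i) (s i) (t i) (a.2 : ℕ) (b.2 : ℕ) := by
  obtain ⟨ja, fa⟩ := a
  obtain ⟨jb, fb⟩ := b
  dsimp at hai hbi ⊢
  subst hai hbi
  obtain ⟨heq, hd⟩ := hE
  exact hd

lemma sigma_eq_iff {k : ℕ} (r s t : Fin k → ℕ) (i : Fin k)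
    (a b : Σ j : Fin k, Fin (r j + s j + t j)) (hai : a.1 = i) (hbi : b.1 = i) :
    a = b ↔ (a.2 : ℕ) = (b.2 : ℕ) := by
  obtain ⟨ja, fa⟩ := a
  obtain ⟨jb, fb⟩ := b
  dsimp at hai hbi ⊢
  subst hai hbi
  simp [Fin.ext_iff]

lemma sigma_lt {k : ℕ} (r s t : Fin k → ℕ) (i : Fin k)
    (a : Σ j : Fin k, Fin (r j + s j + t j)) (hai : a.1 = i) :
    (a.2 : ℕ) < r i + s i + t i := by
  obtain ⟨ja, fa⟩ := a
  dsimp at hai ⊢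
  subst hai
  exact fa.isLt

lemma cantorDist_le_mesh {P : Finset (Set (ℕ → Bool))} {a : Set (ℕ → Bool)}
    (ha : a ∈ P) {x y : ℕ → Bool} (hx : x ∈ a) (hy : y ∈ a) :
    cantorDist x y ≤ mesh (↑P : Set (Set (ℕ → Bool))) := by
  have h1 : cantorDist x y ≤ cantorDiam a := by
    apply le_csSup
    · exact ⟨1, fun z hz => by
        obtain ⟨u, -, v, -, rfl⟩ := hz
        exact cantorDist_le_one u v⟩
    · exact ⟨x, hx, y, hy, rfl⟩
  have h2 : cantorDiam a ≤ mesh (↑P : Set (Set (ℕ → Bool))) := by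
    apply le_csSup
    · exact (P.finite_toSet.image _).bddAbove
    · exact ⟨a, ha, rfl⟩
  linarith

end Aux

theorem no_LiYorke_pair (h : (ℕ → Bool) ≃ₜ (ℕ → Bool))
    (hyp : ∀ m : ℕ, 0 < m → ∃ P : Finset (Set (ℕ → Bool)), IsPartition P ∧
      mesh (↑P : Set (Set (ℕ → Bool))) < 1 / (m : ℝ) ∧ AllComponentsDumbbells (⇑h) P) :
    ∀ σ τ : ℕ → Bool,
      ¬(Filter.liminf (fun n => cantorDist ((⇑h)^[n] σ) ((⇑h)^[n] τ)) Filter.atTop = 0 ∧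
        0 < Filter.limsup (fun n => cantorDist ((⇑h)^[n] σ) ((⇑h)^[n] τ)) Filter.atTop) := by
  classical
  intro σ τ
  rintro ⟨hlim, hsup⟩
  set u : ℕ → ℝ := fun n => cantorDist ((⇑h)^[n] σ) ((⇑h)^[n] τ) with hu
  have hub : ∀ n, u n ≤ 1 := fun n => cantorDist_le_one _ _
  have hlb : ∀ n, 0 ≤ u n := fun n => cantorDist_nonneg _ _
  have hbdd_ge : Filter.IsBoundedUnder (· ≥ ·) Filter.atTop u :=
    Filter.isBoundedUnder_of ⟨0, hlb⟩
  have hbdd_le : Filter.IsBoundedUnder (· ≤ ·) Filter.atTop u :=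
    Filter.isBoundedUnder_of ⟨1, hub⟩
  have hcob : Filter.IsCoboundedUnder (· ≤ ·) Filter.atTop u :=
    hbdd_ge.isCoboundedUnder_flip
  have hcob' : Filter.IsCoboundedUnder (· ≥ ·) Filter.atTop u :=
    hbdd_le.isCoboundedUnder_flip
  set L := Filter.limsup u Filter.atTop with hL
  have hLpos : 0 < L := hsup
  have hfreq_big : ∃ᶠ n in Filter.atTop, L / 2 < u n :=
    Filter.frequently_lt_of_lt_limsup hcob (by linarith)
  obtain ⟨m', hm'⟩ := exists_nat_one_div_lt (half_pos hLpos)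
  obtain ⟨P, ⟨hPclop, hPdisj, hPcover⟩, hmesh, hdumb⟩ := hyp (m' + 1) (Nat.succ_pos _)
  have hmesh' : mesh (↑P : Set (Set (ℕ → Bool))) < L / 2 := by
    have : (1 : ℝ) / ((m' : ℝ) + 1) < L / 2 := hm'
    have h2 : ((m' + 1 : ℕ) : ℝ) = (m' : ℝ) + 1 := by push_cast; ring
    rw [h2] at hmesh
    linarith
  -- choose the partition element containing each point
  have helt : ∀ x : ℕ → Bool, ∃ a : {a // a ∈ P}, x ∈ a.val := by
    intro x
    have hx : x ∈ ⋃₀ (P : Set (Set (ℕ → Bool))) := by rw [hPcover]; trivial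
    obtain ⟨a, haP, hxa⟩ := hx
    exact ⟨⟨a, haP⟩, hxa⟩
  choose g hg using helt
  -- separation constant for distinct elements
  have hsepN : ∀ a : {a // a ∈ P}, ∃ N, ∀ x ∈ a.val, ∀ y : ℕ → Bool,
      (∀ i < N, x i = y i) → y ∈ a.val := fun a =>
    clopen_determined (hPclop a.val a.property).1
  choose f hf using hsepN
  set N := P.attach.sup f with hN
  set δ : ℝ := 1 / ((N : ℝ) + 1) with hδ
  have hδpos : 0 < δ := by positivity
  have hsep : ∀ x y : ℕ → Bool, g x ≠ g y → δ ≤ cantorDist x y := by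
    intro x y hne
    apply cantorDist_ge
    by_contra hcon
    push_neg at hcon
    have hagree : ∀ i < f (g x), x i = y i := by
      intro i hi
      exact hcon i (lt_of_lt_of_le hi (Finset.le_sup (P.mem_attach (g x))))
    have hy' : y ∈ (g x).val := hf (g x) x (hg x) y hagree
    have hdisj := hPdisj (g x).val (g x).property (g y).val (g y).property
      (fun hv => hne (Subtype.ext hv))
    exact (hdisj.ne_of_mem hy' (hg y)) rfl
  -- the dumbbell structure
  obtain ⟨k, r, s, t, hr, hs, ht, e, he⟩ := hdumb
  set X : ℕ → Σ i : Fin k, Fin (r i + s i + t i) := fun n => e (g ((⇑h)^[n] σ)) with hX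
  set Y : ℕ → Σ i : Fin k, Fin (r i + s i + t i) := fun n => e (g ((⇑h)^[n] τ)) with hY
  have hedge : ∀ (ρ : ℕ → Bool) (n : ℕ),
      gammaEdge (⇑h) (g ((⇑h)^[n] ρ)).val (g ((⇑h)^[n+1] ρ)).val := by
    intro ρ n
    refine ⟨(⇑h)^[n+1] ρ, ⟨(⇑h)^[n] ρ, hg _, ?_⟩, hg _⟩
    rw [Function.iterate_succ_apply']
  have hXedge := fun n => (he _ _).mp (hedge σ n)
  have hYedge := fun n => (he _ _).mp (hedge τ n)
  have hXc : ∀ n, (X n).1 = (X 0).1 := by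
    intro n
    induction n with
    | zero => rfl
    | succ p ih => exact ((hXedge p).1).symm.trans ih
  have hYc : ∀ n, (Y n).1 = (Y 0).1 := by
    intro n
    induction n with
    | zero => rfl
    | succ p ih => exact ((hYedge p).1).symm.trans ih
  -- frequently equal
  have hfreq_small : ∃ᶠ n in Filter.atTop, u n < δ :=
    Filter.frequently_lt_of_liminf_lt hcob' (by rw [hlim]; exact hδpos)
  have h1 : ∀ M, ∃ n, M ≤ n ∧ X n = Y n := by
    intro M
    obtain ⟨n, hn, hun⟩ := Filter.frequently_atTop.mp hfreq_small M
    refine ⟨n, hn, ?_⟩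
    have : g ((⇑h)^[n] σ) = g ((⇑h)^[n] τ) := by
      by_contra hc
      exact absurd hun (not_lt.mpr (hsep _ _ hc))
    simp only [hX, hY, this]
  have h2 : ∀ M, ∃ n, M ≤ n ∧ X n ≠ Y n := by
    intro M
    obtain ⟨n, hn, hun⟩ := Filter.frequently_atTop.mp hfreq_big M
    refine ⟨n, hn, fun hc => ?_⟩
    have hgc : g ((⇑h)^[n] σ) = g ((⇑h)^[n] τ) := e.injective hc
    have : u n ≤ mesh (↑P : Set (Set (ℕ → Bool))) := by
      apply cantorDist_le_mesh (g ((⇑h)^[n] σ)).property (hg _)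
      rw [hgc]; exact hg _
    linarith
  -- both trajectories lie in one component
  obtain ⟨n₀, -, hXY₀⟩ := h1 0
  have hY0 : (Y 0).1 = (X 0).1 := by
    calc (Y 0).1 = (Y n₀).1 := (hYc n₀).symm
      _ = (X n₀).1 := by rw [hXY₀]
      _ = (X 0).1 := hXc n₀
  have hXi : ∀ n, (X n).1 = (X 0).1 := hXc
  have hYi : ∀ n, (Y n).1 = (X 0).1 := fun n => (hYc n).trans hY0
  refine nat_key (hr ((X 0).1)) (hs ((X 0).1)) (ht ((X 0).1))
    (fun n => ((X n).2 : ℕ)) (fun n => ((Y n).2 : ℕ))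
    (fun n => sigma_lt r s t _ (X n) (hXi n))
    (fun n => sigma_lt r s t _ (Y n) (hYi n))
    (fun n => sigma_edge_transfer r s t _ (X n) (X (n+1)) (hXi n) (hXi (n+1)) (hXedge n))
    (fun n => sigma_edge_transfer r s t _ (Y n) (Y (n+1)) (hYi n) (hYi (n+1)) (hYedge n))
    (fun M => ?_) (fun M => ?_)
  · obtain ⟨n, hn, hc⟩ := h1 M
    exact ⟨n, hn, (sigma_eq_iff r s t _ (X n) (Y n) (hXi n) (hYi n)).mp hc⟩
  · obtain ⟨n, hn, hc⟩ := h2 M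
    exact ⟨n, hn, fun hv =>
      hc ((sigma_eq_iff r s t _ (X n) (Y n) (hXi n) (hYi n)).mpr hv)⟩
end

section
/- Let f be a continuous self-map of the Cantor space such that for every m ∈ ℕ there is a partition of mesh < 1/m all of whose components in Γ(f,·) are balloons. Then f is chain continuous at every point: for every x and every ε > 0 there exists δ > 0 such that whenever x_0 ∈ B(x;δ), x_1 ∈ B(f(x_0);δ), x_2 ∈ B(f(x_1);δ), …, we have d(x_n, fⁿ(x)) < ε for all n ≥ 0. -/
/-- Every component of `Γ(f,P)` is a balloon. -/
def AllComponentsBalloons (f : (ℕ → Bool) → (ℕ → Bool))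
    (P : Finset (Set (ℕ → Bool))) : Prop :=
  ∃ (k : ℕ) (s t : Fin k → ℕ), (∀ i, 0 < s i) ∧ (∀ i, 0 < t i) ∧
    ∃ e : {a // a ∈ P} ≃ (Σ i : Fin k, Fin (s i + t i)),
      ∀ a b : {a // a ∈ P}, gammaEdge f a.val b.val ↔
        ∃ heq : (e a).1 = (e b).1,
          balloonEdge (s (e b).1) (t (e b).1)
            (Fin.cast (by rw [heq]) (e a).2) (e b).2

open PiNat in
lemma clopen_uniform_cylinder (a : Set (ℕ → Bool)) (h : IsClopen a) :
    ∃ N : ℕ, ∀ σ ∈ a, ∀ τ : ℕ → Bool, (∀ i < N, τ i = σ i) → τ ∈ a := by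
  have hca : IsCompact a := h.isClosed.isCompact
  have key : ∀ σ ∈ a, ∃ n : ℕ, cylinder σ n ⊆ a := by
    intro σ hσ
    obtain ⟨v, ⟨x, n, rfl⟩, hxv, hva⟩ :=
      (isTopologicalBasis_cylinders (fun _ : ℕ => Bool)).exists_subset_of_mem_open hσ h.isOpen
    refine ⟨n, fun τ hτ => hva ?_⟩
    intro i hi
    exact (hτ i hi).trans (hxv i hi)
  choose! n hn using key
  obtain ⟨t, ht⟩ := hca.elim_finite_subcover (fun σ : a => cylinder σ.1 (n σ.1))
    (fun σ => isOpen_cylinder _ σ.1 (n σ.1))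
    (fun σ hσ => Set.mem_iUnion.2 ⟨⟨σ, hσ⟩, self_mem_cylinder _ _⟩)
  refine ⟨t.sup (fun σ => n σ.1), fun σ hσ τ hτ => ?_⟩
  obtain ⟨i, hit, hσi⟩ := Set.mem_iUnion₂.1 (ht hσ)
  refine hn i.1 i.2 ?_
  intro j hj
  exact (hτ j (lt_of_lt_of_le hj (Finset.le_sup (f := fun σ : a => n σ.1) hit))).trans (hσi j hj)

lemma cantorDist_lt_agree {σ τ : ℕ → Bool} {N : ℕ}
    (h : cantorDist σ τ < 1 / (N + 1)) : ∀ i < N, σ i = τ i := by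
  intro i hi
  unfold cantorDist at h
  split_ifs at h with hex
  · have hN : (N : ℝ) + 1 < (Nat.find hex : ℝ) + 1 := by
      rw [div_lt_div_iff₀ (by positivity) (by positivity)] at h
      linarith
    have : N < Nat.find hex := by exact_mod_cast (by linarith : (N:ℝ) < Nat.find hex)
    have := Nat.find_min hex (lt_of_lt_of_le hi this.le)
    exact not_not.mp this
  · push_neg at hex
    exact hex i

lemma cantorDist_le_diam {A : Set (ℕ → Bool)} {σ τ : ℕ → Bool}
    (hσ : σ ∈ A) (hτ : τ ∈ A) : cantorDist σ τ ≤ cantorDiam A := by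
  refine le_csSup ⟨1, ?_⟩ ⟨σ, hσ, τ, hτ, rfl⟩
  rintro r ⟨σ', _, τ', _, rfl⟩
  exact cantorDist_le_one σ' τ'

lemma diam_le_mesh {P : Finset (Set (ℕ → Bool))} {A : Set (ℕ → Bool)} (hA : A ∈ P) :
    cantorDiam A ≤ mesh (↑P : Set (Set (ℕ → Bool))) :=
  le_csSup ((P.finite_toSet.image _).bddAbove) ⟨A, hA, rfl⟩

theorem chain_continuous_everywhere (f : (ℕ → Bool) → (ℕ → Bool)) (hf : Continuous f)
    (hyp : ∀ m : ℕ, 0 < m → ∃ P : Finset (Set (ℕ → Bool)), IsPartition P ∧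
      mesh (↑P : Set (Set (ℕ → Bool))) < 1 / (m : ℝ) ∧ AllComponentsBalloons f P) :
    ∀ x : ℕ → Bool, ∀ ε : ℝ, 0 < ε → ∃ δ : ℝ, 0 < δ ∧
      ∀ xs : ℕ → (ℕ → Bool), cantorDist (xs 0) x < δ →
        (∀ n : ℕ, cantorDist (xs (n + 1)) (f (xs n)) < δ) →
        ∀ n : ℕ, cantorDist (xs n) (f^[n] x) < ε := by
  intro x ε hε
  set m : ℕ := ⌈1/ε⌉₊ + 1 with hm
  obtain ⟨P, ⟨hPc, hPd, hPu⟩, hmesh, hball⟩ := hyp m (Nat.succ_pos _)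
  have h1mε : 1 / (m : ℝ) ≤ ε := by
    have h1 : 1/ε ≤ (m : ℝ) := by
      have := Nat.le_ceil (1/ε)
      push_cast [hm]
      linarith
    calc 1 / (m:ℝ) ≤ 1 / (1/ε) := one_div_le_one_div_of_le (by positivity) h1
    _ = ε := one_div_one_div ε
  -- each point is in a piece
  have hmem : ∀ y : ℕ → Bool, ∃ a ∈ P, y ∈ a := by
    intro y
    have : y ∈ ⋃₀ (P : Set (Set (ℕ → Bool))) := hPu ▸ Set.mem_univ y
    simpa using this
  choose pc hpcP hpc using hmem
  have huniq : ∀ (y : ℕ → Bool) (a : Set (ℕ → Bool)), a ∈ P → y ∈ a → a = pc y := by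
    intro y a ha hya
    by_contra hne
    exact Set.disjoint_left.mp (hPd a ha (pc y) (hpcP y) hne) hya (hpc y)
  -- uniqueness of out-neighbors from balloon structure
  obtain ⟨k, s, t, hs, ht, e, he⟩ := hball
  have huedge : ∀ a b c : {a // a ∈ P}, gammaEdge f a.val b.val → gammaEdge f a.val c.val →
      b = c := by
    intro a b c hab hac
    obtain ⟨h1, e1⟩ := (he a b).mp hab
    obtain ⟨h2, e2⟩ := (he a c).mp hac
    apply e.injective
    have hfst : (e b).1 = (e c).1 := h1.symm.trans h2
    refine Sigma.ext hfst ((Fin.heq_ext_iff (by rw [hfst])).mpr ?_)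
    unfold balloonEdge at e1 e2
    simp only [Fin.coe_cast] at e1 e2
    have hse : s (e c).1 = s (e b).1 := by rw [hfst]
    have hte : t (e c).1 = t (e b).1 := by rw [hfst]
    have hlt1 := (e b).2.isLt
    have hlt2 := (e c).2.isLt
    have := hs (e b).1
    omega
  -- each piece maps into a unique piece
  have hg' : ∀ a, a ∈ P → ∃ b, b ∈ P ∧ f '' a ⊆ b := by
    intro a ha
    obtain ⟨σ, hσ⟩ := (hPc a ha).2
    refine ⟨pc (f σ), hpcP _, ?_⟩
    rintro y ⟨z, hz, rfl⟩
    have h1 : gammaEdge f a (pc (f σ)) := ⟨f σ, ⟨σ, hσ, rfl⟩, hpc _⟩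
    have h2 : gammaEdge f a (pc (f z)) := ⟨f z, ⟨z, hz, rfl⟩, hpc _⟩
    have := huedge ⟨a, ha⟩ ⟨pc (f σ), hpcP _⟩ ⟨pc (f z), hpcP _⟩ h1 h2
    have heq : pc (f σ) = pc (f z) := congrArg Subtype.val this
    exact heq ▸ hpc (f z)
  choose! g hgP hg using hg'
  -- uniform cylinder bound
  have hN' : ∀ a, a ∈ P → ∃ N : ℕ, ∀ σ ∈ a, ∀ τ : ℕ → Bool, (∀ i < N, τ i = σ i) → τ ∈ a :=
    fun a ha => clopen_uniform_cylinder a (hPc a ha).1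
  choose! N hN using hN'
  set Nm : ℕ := P.sup N with hNm
  refine ⟨1 / (Nm + 1), by positivity, ?_⟩
  intro xs h0 hchain
  have hclose : ∀ σ τ : ℕ → Bool, cantorDist σ τ < 1 / (Nm + 1) →
      ∀ a ∈ P, τ ∈ a → σ ∈ a := by
    intro σ τ hd a ha hτ
    have hag := cantorDist_lt_agree hd
    refine hN a ha τ hτ σ ?_
    intro i hi
    exact hag i (lt_of_lt_of_le hi (Finset.le_sup ha))
  have hmain : ∀ n, xs n ∈ pc (f^[n] x) := by
    intro n
    induction n with
    | zero => exact hclose (xs 0) x h0 _ (hpcP x) (hpc x)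
    | succ n ih =>
      have h1 : f (xs n) ∈ g (pc (f^[n] x)) := hg _ (hpcP _) ⟨xs n, ih, rfl⟩
      have h2 : g (pc (f^[n] x)) = pc (f^[n+1] x) := by
        apply huniq
        · exact hgP _ (hpcP _)
        · rw [Function.iterate_succ_apply']
          exact hg _ (hpcP _) ⟨f^[n] x, hpc _, rfl⟩
      exact hclose (xs (n+1)) (f (xs n)) (hchain n) _ (h2 ▸ hgP _ (hpcP _)) (h2 ▸ h1)
  intro n
  calc cantorDist (xs n) (f^[n] x) ≤ cantorDiam (pc (f^[n] x)) :=
        cantorDist_le_diam (hmain n) (hpc _)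
    _ ≤ mesh (↑P : Set (Set (ℕ → Bool))) := diam_le_mesh (hpcP _)
    _ < 1 / (m : ℝ) := hmesh
    _ ≤ ε := h1mε
end

section
/- Let f be a continuous self-map of the Cantor space such that for every m ∈ ℕ there is a partition of mesh < 1/m each of whose components in Γ(f,·) is a balloon. Then f has no Li–Yorke pair: for all σ, τ, if liminf_{n→∞} d(fⁿ(σ),fⁿ(τ)) = 0 then lim_{n→∞} d(fⁿ(σ),fⁿ(τ)) = 0. -/
lemma cantorDist_nonneg_s17 (x y : ℕ → Bool) : 0 ≤ cantorDist x y := by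
  unfold cantorDist
  split
  · positivity
  · exact le_refl 0

lemma cantorDist_le_one_s17 (x y : ℕ → Bool) : cantorDist x y ≤ 1 := by
  unfold cantorDist
  split
  · rw [div_le_one (by positivity)]
    exact le_add_of_nonneg_left (Nat.cast_nonneg _)
  · exact zero_le_one

lemma cantorDist_agree {x y : ℕ → Bool} {N : ℕ}
    (h : cantorDist x y < 1 / ((N : ℝ) + 1)) : ∀ i ≤ N, x i = y i := by
  intro i hi
  unfold cantorDist at h
  split at h
  case isTrue hex =>
    rw [div_lt_div_iff₀ (by positivity) (by positivity)] at h
    have hN : N < Nat.find hex := by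
      have : (N : ℝ) < Nat.find hex := by nlinarith
      exact_mod_cast this
    exact not_not.mp (Nat.find_min hex (lt_of_le_of_lt hi hN))
  case isFalse hex =>
    by_contra hne; exact hex ⟨i, hne⟩

lemma cantorDist_le_diam_s17 {A : Set (ℕ → Bool)} {x y : ℕ → Bool} (hx : x ∈ A) (hy : y ∈ A) :
    cantorDist x y ≤ cantorDiam A :=
  le_csSup ⟨1, by rintro r ⟨σ, _, τ, _, rfl⟩; exact cantorDist_le_one_s17 σ τ⟩ ⟨x, hx, y, hy, rfl⟩

lemma cantorDiam_le_one (A : Set (ℕ → Bool)) : cantorDiam A ≤ 1 :=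
  Real.sSup_le (by rintro r ⟨σ, _, τ, _, rfl⟩; exact cantorDist_le_one_s17 σ τ) zero_le_one

lemma cantorDiam_le_mesh {P : Set (Set (ℕ → Bool))} {A : Set (ℕ → Bool)} (hA : A ∈ P) :
    cantorDiam A ≤ mesh P :=
  le_csSup ⟨1, by rintro r ⟨B, _, rfl⟩; exact cantorDiam_le_one B⟩ ⟨A, hA, rfl⟩

lemma sigma_fin_ext {k : ℕ} {s t : Fin k → ℕ} {x y : Σ i : Fin k, Fin (s i + t i)}
    (h1 : x.1 = y.1) (h2 : x.2.val = y.2.val) : x = y := by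
  obtain ⟨i, p⟩ := x; obtain ⟨j, q⟩ := y
  dsimp at h1 h2; subst h1
  exact Sigma.ext rfl (heq_of_eq (Fin.ext h2))

lemma clopen_cylinder {a : Set (ℕ → Bool)} (ha : IsClopen a) :
    ∃ N : ℕ, ∀ x ∈ a, ∀ y : ℕ → Bool, (∀ i ≤ N, y i = x i) → y ∈ a := by
  have hcomp : IsCompact a := ha.isClosed.isCompact
  have hpt : ∀ x : {x // x ∈ a}, ∃ N : ℕ, ∀ y : ℕ → Bool, (∀ i ≤ N, y i = x.val i) → y ∈ a := by
    rintro ⟨x, hx⟩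
    obtain ⟨I, u, hIu, hsub⟩ := isOpen_pi_iff.mp ha.isOpen x hx
    refine ⟨I.sup id, fun y hy => hsub fun i hi => ?_⟩
    have hiI : i ∈ I := hi
    have : y i = x i := hy i (Finset.le_sup (f := id) hiI)
    rw [this]; exact (hIu i hiI).2
  choose g hg using hpt
  have hcover : a ⊆ ⋃ x : {x // x ∈ a}, {y | ∀ i ≤ g x, y i = x.val i} := by
    intro x hx; exact Set.mem_iUnion.mpr ⟨⟨x, hx⟩, fun i _ => rfl⟩
  have hopen : ∀ x : {x // x ∈ a}, IsOpen {y : ℕ → Bool | ∀ i ≤ g x, y i = x.val i} := by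
    intro x
    have he : {y : ℕ → Bool | ∀ i ≤ g x, y i = x.val i}
        = ⋂ i ∈ Finset.range (g x + 1), {y : ℕ → Bool | y i = x.val i} := by
      ext y; simp [Nat.lt_succ_iff]
    rw [he]
    refine isOpen_biInter_finset fun i _ => ?_
    have : IsOpen ((fun y : ℕ → Bool => y i) ⁻¹' {x.val i}) :=
      IsOpen.preimage (continuous_apply i) (isOpen_discrete _)
    exact this
  obtain ⟨T, hT⟩ := hcomp.elim_finite_subcover _ hopen hcover
  refine ⟨T.sup g, fun x hx y hy => ?_⟩
  obtain ⟨z, hzT, hz⟩ := Set.mem_iUnion₂.mp (hT hx)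
  exact hg z y fun i hi => ((hy i (le_trans hi (Finset.le_sup hzT))).trans (hz i hi))

theorem no_LiYorke_pair_cont (f : (ℕ → Bool) → (ℕ → Bool)) (hf : Continuous f)
    (hyp : ∀ m : ℕ, 0 < m → ∃ P : Finset (Set (ℕ → Bool)), IsPartition P ∧
      mesh (↑P : Set (Set (ℕ → Bool))) < 1 / (m : ℝ) ∧ AllComponentsBalloons f P) :
    ∀ σ τ : ℕ → Bool,
      Filter.liminf (fun n => cantorDist (f^[n] σ) (f^[n] τ)) Filter.atTop = 0 →
      Filter.Tendsto (fun n => cantorDist (f^[n] σ) (f^[n] τ)) Filter.atTop (nhds 0) := by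
  classical
  intro σ τ hlim
  set u : ℕ → ℝ := fun n => cantorDist (f^[n] σ) (f^[n] τ) with hu
  have hfreq : ∀ δ : ℝ, 0 < δ → ∀ n₀ : ℕ, ∃ n, n₀ ≤ n ∧ u n < δ := by
    intro δ hδ n₀
    by_contra hcon
    push_neg at hcon
    have hb : Filter.IsBoundedUnder (· ≤ ·) Filter.atTop u :=
      Filter.isBoundedUnder_of ⟨1, fun n => cantorDist_le_one_s17 _ _⟩
    have hδle : δ ≤ Filter.liminf u Filter.atTop := by
      apply Filter.le_liminf_of_le hb.isCoboundedUnder_ge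
      exact Filter.eventually_atTop.mpr ⟨n₀, hcon⟩
    rw [hlim] at hδle; linarith
  rw [Metric.tendsto_atTop]
  intro ε hε
  obtain ⟨m, hm⟩ := exists_nat_one_div_lt hε
  obtain ⟨P, hpart, hmesh, hball⟩ := hyp (m + 1) (Nat.succ_pos m)
  obtain ⟨hPne, hPdisj, hPcover⟩ := hpart
  obtain ⟨k, s, t, hs, ht, e, hedge⟩ := hball
  have hmem : ∀ x : ℕ → Bool, ∃ a ∈ P, x ∈ a := by
    intro x
    have hx : x ∈ ⋃₀ (P : Set (Set (ℕ → Bool))) := hPcover ▸ Set.mem_univ x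
    obtain ⟨a, haP, hxa⟩ := hx
    exact ⟨a, haP, hxa⟩
  have huniq : ∀ a b c : {a // a ∈ P},
      gammaEdge f a.val b.val → gammaEdge f a.val c.val → b = c := by
    intro a b c hab hac
    obtain ⟨h1, e1⟩ := (hedge a b).mp hab
    obtain ⟨h2, e2⟩ := (hedge a c).mp hac
    apply e.injective
    have hbc : (e b).1 = (e c).1 := h1 ▸ h2
    apply sigma_fin_ext hbc
    have hb := (e b).2.isLt
    have hc := (e c).2.isLt
    have hsbc : s (e b).1 = s (e c).1 := by rw [hbc]
    have htbc : t (e b).1 = t (e c).1 := by rw [hbc]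
    unfold balloonEdge at e1 e2
    simp only [Fin.coe_cast] at e1 e2
    have hs1 := hs (e b).1
    have ht1 := ht (e b).1
    omega
  have hsucc : ∀ a : {a // a ∈ P}, ∃ b : {a // a ∈ P}, f '' a.val ⊆ b.val := by
    intro a
    obtain ⟨x, hx⟩ := (hPne a.val a.prop).2
    obtain ⟨b, hbP, hfb⟩ := hmem (f x)
    refine ⟨⟨b, hbP⟩, ?_⟩
    rintro _ ⟨y, hy, rfl⟩
    obtain ⟨c, hcP, hfc⟩ := hmem (f y)
    have h1 : gammaEdge f a.val b := ⟨f x, ⟨x, hx, rfl⟩, hfb⟩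
    have h2 : gammaEdge f a.val c := ⟨f y, ⟨y, hy, rfl⟩, hfc⟩
    have hbceq := huniq a ⟨b, hbP⟩ ⟨c, hcP⟩ h1 h2
    have hbc : b = c := congrArg Subtype.val hbceq
    show f y ∈ b
    rw [hbc]; exact hfc
  choose F hF using hsucc
  have hiter : ∀ n (a : {a // a ∈ P}) (x : ℕ → Bool), x ∈ a.val → f^[n] x ∈ (F^[n] a).val := by
    intro n
    induction n with
    | zero => intro a x hx; exact hx
    | succ n ih =>
      intro a x hx
      rw [Function.iterate_succ_apply, Function.iterate_succ_apply]
      exact ih (F a) (f x) (hF a ⟨x, hx, rfl⟩)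
  -- Lebesgue number for the partition
  have hQ : ∀ a ∈ P, ∃ N : ℕ, ∀ x ∈ a, ∀ y : ℕ → Bool, (∀ i ≤ N, y i = x i) → y ∈ a :=
    fun a ha => clopen_cylinder (hPne a ha).1
  let g : Set (ℕ → Bool) → ℕ := fun a =>
    if h : ∃ N : ℕ, ∀ x ∈ a, ∀ y : ℕ → Bool, (∀ i ≤ N, y i = x i) → y ∈ a then h.choose else 0
  set N := P.sup g with hNdef
  have hNa : ∀ a ∈ P, ∀ x ∈ a, ∀ y : ℕ → Bool, (∀ i ≤ N, y i = x i) → y ∈ a := by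
    intro a ha x hx y hy
    have hex := hQ a ha
    have hspec := hex.choose_spec
    have hga : g a = hex.choose := dif_pos hex
    have hle : g a ≤ N := Finset.le_sup ha
    exact hspec x hx y fun i hi => hy i (le_trans (le_trans hi (hga ▸ hle)) le_rfl)
  obtain ⟨n₀, -, hn₀⟩ := hfreq (1 / ((N : ℝ) + 1)) (by positivity) 0
  obtain ⟨a, haP, hσa⟩ := hmem (f^[n₀] σ)
  have hτa : f^[n₀] τ ∈ a :=
    hNa a haP _ hσa _ fun i hi => (cantorDist_agree hn₀ i hi).symm
  refine ⟨n₀, fun n hn => ?_⟩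
  have hσn : f^[n] σ = f^[n - n₀] (f^[n₀] σ) := by
    rw [← Function.iterate_add_apply]; congr 1; omega
  have hτn : f^[n] τ = f^[n - n₀] (f^[n₀] τ) := by
    rw [← Function.iterate_add_apply]; congr 1; omega
  have hσm : f^[n] σ ∈ (F^[n - n₀] ⟨a, haP⟩).val := by
    rw [hσn]; exact hiter _ _ _ hσa
  have hτm : f^[n] τ ∈ (F^[n - n₀] ⟨a, haP⟩).val := by
    rw [hτn]; exact hiter _ _ _ hτa
  have hd : u n ≤ mesh (↑P : Set (Set (ℕ → Bool))) :=
    le_trans (cantorDist_le_diam_s17 hσm hτm)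
      (cantorDiam_le_mesh (Finset.mem_coe.mpr (F^[n - n₀] ⟨a, haP⟩).prop))
  have hmε : mesh (↑P : Set (Set (ℕ → Bool))) < ε := by
    push_cast at hmesh
    linarith
  have hun : u n < ε := lt_of_le_of_lt hd hmε
  rw [Real.dist_eq, sub_zero, abs_of_nonneg (cantorDist_nonneg_s17 _ _)]
  exact hun
end

section
/- For every natural number m, the set T_m of all continuous self-maps f of the Cantor space for which there exist a partition P of mesh < 1/m and a multiple q of m such that every component of Γ(f,P) is a balloon of type (q!,q!) which is strict relative to f, is an open and dense subset of the space of continuous self-maps of the Cantor space with the uniform metric. -/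
/-- Property (Q) of the paper, for a fixed `m`: there are a partition of mesh `< 1/m`
and a multiple `q` of `m` such that every component of `Γ(f,P)` is a balloon of
type `(q!,q!)` which is strict relative to `f`. -/
def StrictBalloonsProp (m : ℕ) (f : (ℕ → Bool) → (ℕ → Bool)) : Prop :=
  ∃ P : Finset (Set (ℕ → Bool)), IsPartition P ∧
    mesh (↑P : Set (Set (ℕ → Bool))) < 1 / (m : ℝ) ∧
    ∃ q : ℕ, 0 < q ∧ m ∣ q ∧
      ∃ (k : ℕ) (e : {a // a ∈ P} ≃ Fin k × Fin (q.factorial + q.factorial)),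
        (∀ a b : {a // a ∈ P}, gammaEdge f a.val b.val ↔
          ((e a).1 = (e b).1 ∧ balloonEdge q.factorial q.factorial (e a).2 (e b).2)) ∧
        (∀ i : Fin k,
          (∀ j : ℕ, ∀ hj : j + 1 < q.factorial + q.factorial, j + 1 ≠ q.factorial →
            f '' (e.symm (i, ⟨j, by omega⟩)).val ⊂ (e.symm (i, ⟨j + 1, hj⟩)).val) ∧
          (f '' (e.symm (i, ⟨q.factorial - 1,
              by have := Nat.factorial_pos q; omega⟩)).val ∪
           f '' (e.symm (i, ⟨q.factorial + q.factorial - 1,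
              by have := Nat.factorial_pos q; omega⟩)).val
            ⊂ (e.symm (i, ⟨q.factorial, by have := Nat.factorial_pos q; omega⟩)).val))



lemma cantorDist_le_of_agree {σ τ : ℕ → Bool} {n : ℕ} (h : ∀ i < n, σ i = τ i) :
    cantorDist σ τ ≤ 1 / (n + 1 : ℝ) := by
  rw [cantorDist]
  split_ifs with h'
  · have hf : n ≤ Nat.find h' := by
      rw [Nat.le_find_iff]
      intro i hi hne
      exact hne (h i hi)
    apply one_div_le_one_div_of_le
    · positivity
    · have : (n : ℝ) ≤ Nat.find h' := by exact_mod_cast hf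
      linarith
  · positivity

lemma agree_of_cantorDist_lt {σ τ : ℕ → Bool} {n : ℕ}
    (h : cantorDist σ τ < 1 / (n + 1 : ℝ)) : ∀ i ≤ n, σ i = τ i := by
  intro i hi
  rw [cantorDist] at h
  split_ifs at h with h'
  · by_contra hne
    have hfind : Nat.find h' ≤ i := Nat.find_le hne
    have : (1 : ℝ) / (n + 1) ≤ 1 / (Nat.find h' + 1) := by
      apply one_div_le_one_div_of_le
      · positivity
      · have : (Nat.find h' : ℝ) ≤ n := by
          have := hfind.trans hi
          exact_mod_cast this
        linarith
    linarith
  · push_neg at h'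
    exact h' i

lemma isClopen_of_dep (K : ℕ) (S : Set (ℕ → Bool))
    (h : ∀ σ τ : ℕ → Bool, (∀ i < K, σ i = τ i) → σ ∈ S → τ ∈ S) : IsClopen S := by
  set π : (ℕ → Bool) → (Fin K → Bool) := fun σ i => σ i.val with hπ
  have hcont : Continuous π := continuous_pi fun i => continuous_apply i.val
  have hS : S = π ⁻¹' (π '' S) := by
    apply Set.Subset.antisymm
    · exact Set.subset_preimage_image π S
    · rintro σ ⟨τ, hτS, hτσ⟩
      refine h τ σ ?_ hτS
      intro i hi
      exact congrFun hτσ ⟨i, hi⟩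
  rw [hS]
  exact (isClopen_discrete _).preimage hcont

lemma continuous_of_dep (K : ℕ) (g : (ℕ → Bool) → (ℕ → Bool))
    (h : ∀ σ τ : ℕ → Bool, (∀ i < K, σ i = τ i) → g σ = g τ) : Continuous g := by
  set G : (Fin K → Bool) → (ℕ → Bool) := fun w =>
    g (fun i => if hi : i < K then w ⟨i, hi⟩ else false) with hG
  set π : (ℕ → Bool) → (Fin K → Bool) := fun σ i => σ i.val with hπ
  have hg : g = G ∘ π := by
    funext σ
    exact h σ _ (fun i hi => by simp [hi, hπ])
  rw [hg]
  exact (continuous_of_discreteTopology).comp (continuous_pi fun i => continuous_apply i.val)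

lemma exists_stable_of_isOpen_mem {U : Set (ℕ → Bool)} {τ : ℕ → Bool}
    (hU : IsOpen U) (hτ : τ ∈ U) : ∃ n, ∀ y : ℕ → Bool, (∀ i < n, τ i = y i) → y ∈ U := by
  rw [isOpen_pi_iff] at hU
  obtain ⟨I, u, hu, hsub⟩ := hU τ hτ
  refine ⟨I.sup id + 1, fun y hy => hsub ?_⟩
  intro i hi
  have : τ i = y i := hy i (by
    have h2 : id i ≤ I.sup id := Finset.le_sup (f := id) hi
    simp only [id] at h2
    omega)
  rw [← this]
  exact (hu i hi).2

def stableIn (n : ℕ) (B : Set (ℕ → Bool)) : Prop :=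
  ∀ x ∈ B, ∀ y : ℕ → Bool, (∀ i < n, x i = y i) → y ∈ B

lemma stableIn_mono {n n' : ℕ} {B : Set (ℕ → Bool)} (h : n ≤ n') (hs : stableIn n B) :
    stableIn n' B := fun x hx y hy => hs x hx y (fun i hi => hy i (lt_of_lt_of_le hi h))

lemma exists_stable_of_isClopen {B : Set (ℕ → Bool)} (hB : IsClopen B) :
    ∃ n, stableIn n B := by
  classical
  have hcomp : IsCompact B := hB.1.isCompact
  -- choose for each x ∈ B a cylinder inside B
  have hch : ∀ x : ℕ → Bool, x ∈ B → ∃ n, ∀ y : ℕ → Bool, (∀ i < n, x i = y i) → y ∈ B :=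
    fun x hx => exists_stable_of_isOpen_mem hB.2 hx
  choose! nn hnn using hch
  have hcover : B ⊆ ⋃ x ∈ B, {y : ℕ → Bool | ∀ i < nn x, x i = y i} := by
    intro x hx
    exact Set.mem_biUnion hx (fun i _ => rfl)
  obtain ⟨t, ht⟩ := hcomp.elim_finite_subcover_image
    (fun x hx => ((isClopen_of_dep (nn x) _ (by
      intro σ σ' hagree hσ i hi
      rw [hσ i hi]; exact hagree i hi)).2))
    hcover
  obtain ⟨htB, htfin, htsub⟩ := ht
  refine ⟨htfin.toFinset.sup nn, ?_⟩
  intro x hx y hy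
  have := htsub hx
  simp only [Set.mem_iUnion] at this
  obtain ⟨z, hz, hxz⟩ := this
  have hzB : z ∈ B := htB hz
  refine hnn z hzB y ?_
  intro i hi
  rw [hxz i hi]
  refine hy i (lt_of_lt_of_le hi ?_)
  exact Finset.le_sup (htfin.mem_toFinset.mpr hz)

lemma cantorDiam_le {A : Set (ℕ → Bool)} {M : ℕ}
    (h : ∀ x ∈ A, ∀ y ∈ A, ∀ i < M, x i = y i) : cantorDiam A ≤ 1 / (M + 1 : ℝ) := by
  apply Real.sSup_le
  · rintro r ⟨σ, hσ, τ, hτ, rfl⟩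
    exact cantorDist_le_of_agree (h σ hσ τ hτ)
  · positivity

lemma mesh_le {P : Finset (Set (ℕ → Bool))} {M : ℕ}
    (h : ∀ a ∈ P, ∀ x ∈ a, ∀ y ∈ a, ∀ i < M, x i = y i) :
    mesh (↑P : Set (Set (ℕ → Bool))) ≤ 1 / (M + 1 : ℝ) := by
  apply Real.sSup_le
  · rintro r ⟨a, ha, rfl⟩
    exact cantorDiam_le (h a ha)
  · positivity

lemma exists_sep_of_compl {C : Set (ℕ → Bool)} {τ : ℕ → Bool}
    (hC : IsClosed C) (hτ : τ ∉ C) : ∃ n, ∀ y ∈ C, ¬ (∀ i < n, τ i = y i) := by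
  obtain ⟨n, hn⟩ := exists_stable_of_isOpen_mem hC.isOpen_compl hτ
  exact ⟨n, fun y hy hagree => hn y hagree hy⟩

theorem open_part (m : ℕ) (f : (ℕ → Bool) → (ℕ → Bool)) (hf : Continuous f)
    (h : StrictBalloonsProp m f) :
    ∃ ε : ℝ, 0 < ε ∧ ∀ g : (ℕ → Bool) → (ℕ → Bool), Continuous g →
      (∀ σ, cantorDist (g σ) (f σ) < ε) → StrictBalloonsProp m g := by
  classical
  obtain ⟨P, hPart, hmesh, q, hq, hmq, k, e, hedge, hstrict⟩ := h
  have hF1 : 1 ≤ q.factorial := Nat.factorial_pos q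
  have hAP : ∀ (i : Fin k) (j : Fin (q.factorial + q.factorial)), (e.symm (i, j)).val ∈ P :=
    fun i j => (e.symm (i, j)).2
  have hAcomp : ∀ (i : Fin k) (j : Fin (q.factorial + q.factorial)),
      IsClosed (f '' (e.symm (i, j)).val) := by
    intro i j
    have hclo : IsClopen (e.symm (i, j)).val := (hPart.1 _ (hAP i j)).1
    exact (hclo.1.isCompact.image hf).isClosed
  have hstab : ∀ a ∈ P, ∃ n, stableIn n a := fun a ha =>
    exists_stable_of_isClopen (hPart.1 a ha).1
  choose! ns hns using hstab
  have hsep1 : ∀ (i : Fin k) (j : ℕ), ∃ n, ∀ (hj : j + 1 < q.factorial + q.factorial),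
      j + 1 ≠ q.factorial →
      ∃ τ, τ ∈ (e.symm (i, ⟨j + 1, hj⟩)).val ∧
        ∀ y ∈ f '' (e.symm (i, ⟨j, by omega⟩)).val, ¬ (∀ t < n, τ t = y t) := by
    intro i j
    by_cases hc : j + 1 < q.factorial + q.factorial ∧ j + 1 ≠ q.factorial
    · obtain ⟨hj, hne⟩ := hc
      have hss := (hstrict i).1 j hj hne
      obtain ⟨τ, hτB, hτC⟩ := Set.exists_of_ssubset hss
      obtain ⟨n, hn⟩ := exists_sep_of_compl (hAcomp i ⟨j, by omega⟩) hτC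
      exact ⟨n, fun _ _ => ⟨τ, hτB, hn⟩⟩
    · exact ⟨0, fun hj hne => absurd ⟨hj, hne⟩ hc⟩
  choose W1 hW1 using hsep1
  have hsep2 : ∀ i : Fin k, ∃ n, ∃ τ,
      τ ∈ (e.symm (i, ⟨q.factorial, by omega⟩)).val ∧
      ∀ y ∈ (f '' (e.symm (i, ⟨q.factorial - 1, by omega⟩)).val ∪
             f '' (e.symm (i, ⟨q.factorial + q.factorial - 1, by omega⟩)).val),
        ¬ (∀ t < n, τ t = y t) := by
    intro i
    have hss := (hstrict i).2
    obtain ⟨τ, hτB, hτC⟩ := Set.exists_of_ssubset hss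
    have hcl : IsClosed (f '' (e.symm (i, ⟨q.factorial - 1, by omega⟩)).val ∪
        f '' (e.symm (i, ⟨q.factorial + q.factorial - 1, by omega⟩)).val) :=
      (hAcomp i _).union (hAcomp i _)
    obtain ⟨n, hn⟩ := exists_sep_of_compl hcl hτC
    exact ⟨n, τ, hτB, hn⟩
  choose W2 hW2 using hsep2
  set T : ℕ := (P.sup ns) ⊔ (Finset.univ.sup fun i : Fin k =>
    ((Finset.range (q.factorial + q.factorial)).sup (W1 i)) ⊔ W2 i) with hT
  have hnsT : ∀ a ∈ P, ns a ≤ T := fun a ha =>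
    le_trans (Finset.le_sup ha) le_sup_left
  have hW1T : ∀ (i : Fin k) (j : ℕ), j < q.factorial + q.factorial → W1 i j ≤ T := by
    intro i j hj
    have h1 : W1 i j ≤ ((Finset.range (q.factorial + q.factorial)).sup (W1 i)) ⊔ W2 i :=
      le_trans (Finset.le_sup (Finset.mem_range.mpr hj)) le_sup_left
    have h2 : ((Finset.range (q.factorial + q.factorial)).sup (W1 i)) ⊔ W2 i ≤
        Finset.univ.sup (fun i : Fin k =>
          ((Finset.range (q.factorial + q.factorial)).sup (W1 i)) ⊔ W2 i) :=
      Finset.le_sup (f := fun i : Fin k => ((Finset.range (q.factorial + q.factorial)).sup (W1 i)) ⊔ W2 i) (Finset.mem_univ i)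
    exact le_trans (le_trans h1 h2) le_sup_right
  have hW2T : ∀ i : Fin k, W2 i ≤ T := by
    intro i
    have h1 : W2 i ≤ ((Finset.range (q.factorial + q.factorial)).sup (W1 i)) ⊔ W2 i :=
      le_sup_right
    have h2 : ((Finset.range (q.factorial + q.factorial)).sup (W1 i)) ⊔ W2 i ≤
        Finset.univ.sup (fun i : Fin k =>
          ((Finset.range (q.factorial + q.factorial)).sup (W1 i)) ⊔ W2 i) :=
      Finset.le_sup (f := fun i : Fin k => ((Finset.range (q.factorial + q.factorial)).sup (W1 i)) ⊔ W2 i) (Finset.mem_univ i)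
    exact le_trans (le_trans h1 h2) le_sup_right
  refine ⟨1 / (T + 1 : ℝ), by positivity, ?_⟩
  intro g hg hclose
  have hagree : ∀ σ, ∀ t ≤ T, g σ t = f σ t := fun σ =>
    agree_of_cantorDist_lt (hclose σ)
  have htrans : ∀ a ∈ P, ∀ σ, (f σ ∈ a ↔ g σ ∈ a) := by
    intro a ha σ
    constructor
    · intro hfa
      refine hns a ha (f σ) hfa (g σ) (fun t ht => ?_)
      exact (hagree σ t (le_of_lt (lt_of_lt_of_le ht (hnsT a ha)))).symm
    · intro hga
      refine hns a ha (g σ) hga (f σ) (fun t ht => ?_)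
      exact hagree σ t (le_of_lt (lt_of_lt_of_le ht (hnsT a ha)))
  refine ⟨P, hPart, hmesh, q, hq, hmq, k, e, ?_, ?_⟩
  · intro a b
    rw [← hedge a b]
    unfold gammaEdge
    constructor
    · rintro ⟨y, ⟨σ, hσ, rfl⟩, hyb⟩
      exact ⟨f σ, ⟨σ, hσ, rfl⟩, (htrans b.val b.2 σ).mpr hyb⟩
    · rintro ⟨y, ⟨σ, hσ, rfl⟩, hyb⟩
      exact ⟨g σ, ⟨σ, hσ, rfl⟩, (htrans b.val b.2 σ).mp hyb⟩
  · intro i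
    have hsubt : ∀ (j j' : Fin (q.factorial + q.factorial)),
        f '' (e.symm (i, j)).val ⊆ (e.symm (i, j')).val →
        g '' (e.symm (i, j)).val ⊆ (e.symm (i, j')).val := by
      rintro j j' hsub y ⟨σ, hσ, rfl⟩
      exact (htrans _ (hAP i j') σ).mp (hsub ⟨σ, hσ, rfl⟩)
    constructor
    · intro j hj hne
      obtain ⟨τ, hτB, hn⟩ := hW1 i j hj hne
      have hsubf : f '' (e.symm (i, ⟨j, by omega⟩)).val ⊆ (e.symm (i, ⟨j + 1, hj⟩)).val :=
        ((hstrict i).1 j hj hne).1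
      refine (Set.ssubset_iff_of_subset (hsubt _ _ hsubf)).mpr ⟨τ, hτB, ?_⟩
      rintro ⟨σ, hσ, hgστ⟩
      refine hn (f σ) ⟨σ, hσ, rfl⟩ ?_
      intro t ht
      rw [← hgστ]
      exact hagree σ t (le_of_lt (lt_of_lt_of_le ht (hW1T i j (by omega))))
    · obtain ⟨τ, hτB, hn⟩ := hW2 i
      have hsubf := (hstrict i).2.1
      have hsubg : g '' (e.symm (i, ⟨q.factorial - 1, by omega⟩)).val ∪
          g '' (e.symm (i, ⟨q.factorial + q.factorial - 1, by omega⟩)).val ⊆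
          (e.symm (i, ⟨q.factorial, by omega⟩)).val := by
        refine Set.union_subset (hsubt _ _ ?_) (hsubt _ _ ?_)
        · exact fun y hy => hsubf (Set.mem_union_left _ hy)
        · exact fun y hy => hsubf (Set.mem_union_right _ hy)
      refine (Set.ssubset_iff_of_subset hsubg).mpr ⟨τ, hτB, ?_⟩
      rintro (⟨σ, hσ, hgστ⟩ | ⟨σ, hσ, hgστ⟩)
      · refine hn (f σ) (Set.mem_union_left _ ⟨σ, hσ, rfl⟩) ?_
        intro t ht
        rw [← hgστ]
        exact hagree σ t (le_of_lt (lt_of_lt_of_le ht (hW2T i)))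
      · refine hn (f σ) (Set.mem_union_right _ ⟨σ, hσ, rfl⟩) ?_
        intro t ht
        rw [← hgστ]
        exact hagree σ t (le_of_lt (lt_of_lt_of_le ht (hW2T i)))

section DensityConstruction

variable (M D F : ℕ) (xs : (Fin M → Bool) → ℕ → (ℕ → Bool))

def Qsmall (w : Fin M → Bool) (j : ℕ) : Set (ℕ → Bool) :=
  {σ | (∀ i < M, σ i = xs w j i) ∧ σ M = true ∧
    (∀ i : Fin M, σ (M + 1 + i.val) = w i) ∧
    (∀ t, t < D → σ (M + 1 + M + t) = decide (t < j))}

def Qbig (w : Fin M → Bool) : Set (ℕ → Bool) :=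
  {σ | (∀ i : Fin M, σ i.val = w i) ∧
    ¬ ∃ p : (Fin M → Bool) × ℕ, 1 ≤ p.2 ∧ p.2 ≤ F + F - 1 ∧ σ ∈ Qsmall M D xs p.1 p.2}

def PieceP (p : (Fin M → Bool) × ℕ) : Set (ℕ → Bool) :=
  if p.2 = 0 then Qbig M D F xs p.1 else Qsmall M D xs p.1 p.2

def ptQ (w : Fin M → Bool) (j : ℕ) (b : Bool) : ℕ → Bool := fun i =>
  if hi : i < M then xs w j i
  else if hieq : i = M then true
  else if h : i < M + 1 + M then w ⟨i - (M + 1), by omega⟩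
  else if i < M + 1 + M + D then decide (i - (M + 1 + M) < j)
  else b

lemma mem_ptQ (w : Fin M → Bool) (j : ℕ) (b : Bool) : ptQ M D xs w j b ∈ Qsmall M D xs w j := by
  refine ⟨fun i hi => by simp [ptQ, hi], by simp [ptQ], fun i => ?_, fun t ht => ?_⟩
  · have h1 : ¬ (M + 1 + i.val < M) := by omega
    have h2 : ¬ (M + 1 + i.val = M) := by omega
    have h3 : M + 1 + i.val < M + 1 + M := by omega
    simp only [ptQ, h1, h2, h3, dif_neg, if_neg, dif_pos, not_false_iff]
    congr 1
    ext
    simp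
  · have h1 : ¬ (M + 1 + M + t < M) := by omega
    have h2 : ¬ (M + 1 + M + t = M) := by omega
    have h3 : ¬ (M + 1 + M + t < M + 1 + M) := by omega
    have h4 : M + 1 + M + t < M + 1 + M + D := by omega
    simp only [ptQ, h1, h2, h3, h4, dif_neg, if_neg, dif_neg, if_pos, not_false_iff]
    have he : M + 1 + M + t - (M + 1 + M) = t := by omega
    rw [he]

lemma ptQ_ne (w : Fin M → Bool) (j : ℕ) : ptQ M D xs w j false ≠ ptQ M D xs w j true := by
  intro h
  have := congrFun h (M + 1 + M + D)
  have h1 : ¬ (M + 1 + M + D < M) := by omega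
  have h2 : ¬ (M + 1 + M + D = M) := by omega
  have h3 : ¬ (M + 1 + M + D < M + 1 + M) := by omega
  have h4 : ¬ (M + 1 + M + D < M + 1 + M + D) := by omega
  simp only [ptQ, h1, h2, h3, h4, dif_neg, if_neg, not_false_iff] at this
  exact Bool.false_ne_true this

lemma qsmall_unique {w w' : Fin M → Bool} {j j' : ℕ} {σ : ℕ → Bool}
    (hj : j ≤ D) (hj' : j' ≤ D)
    (h : σ ∈ Qsmall M D xs w j) (h' : σ ∈ Qsmall M D xs w' j') : w = w' ∧ j = j' := by
  obtain ⟨-, -, h3, h4⟩ := h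
  obtain ⟨-, -, h3', h4'⟩ := h'
  constructor
  · funext i
    rw [← h3 i, ← h3' i]
  · by_contra hne
    rcases Nat.lt_or_ge j j' with hlt | hge
    · have := (h4 j (by omega)).symm.trans (h4' j (by omega))
      simp [hlt] at this
    · have hlt : j' < j := by omega
      have := (h4 j' (by omega)).symm.trans (h4' j' (by omega))
      simp [hlt] at this

end DensityConstruction

section DensityConstruction2

variable (M D F : ℕ) (xs : (Fin M → Bool) → ℕ → (ℕ → Bool))

noncomputable def classifyP (σ : ℕ → Bool) : (Fin M → Bool) × ℕ := by
  classical
  exact if h : ∃ p : (Fin M → Bool) × ℕ, 1 ≤ p.2 ∧ p.2 ≤ F + F - 1 ∧ σ ∈ Qsmall M D xs p.1 p.2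
  then h.choose else ((fun i => σ i.val), 0)

def succIdx (F j : ℕ) : ℕ := if j = F + F - 1 then F else j + 1

noncomputable def gmap (σ : ℕ → Bool) : ℕ → Bool :=
  ptQ M D xs (classifyP M D F xs σ).1 (succIdx F (classifyP M D F xs σ).2) false

lemma classifyP_le (σ : ℕ → Bool) : (classifyP M D F xs σ).2 ≤ F + F - 1 := by
  rw [classifyP]
  split_ifs with h
  · exact h.choose_spec.2.1
  · exact Nat.zero_le _

lemma mem_classifyP (σ : ℕ → Bool) : σ ∈ PieceP M D F xs (classifyP M D F xs σ) := by
  rw [classifyP, PieceP]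
  split_ifs with h h0 h0
  · exact absurd h0 (by have := h.choose_spec.1; omega)
  · exact h.choose_spec.2.2
  · exact ⟨fun i => rfl, h⟩
  · exact absurd rfl h0

lemma classifyP_eq_of_mem (hD : F + F ≤ D) {σ : ℕ → Bool} {p : (Fin M → Bool) × ℕ}
    (hp : p.2 ≤ F + F - 1) (hσ : σ ∈ PieceP M D F xs p) : classifyP M D F xs σ = p := by
  rw [PieceP] at hσ
  rw [classifyP]
  by_cases h0 : p.2 = 0
  · rw [if_pos h0] at hσ
    obtain ⟨h1, h2⟩ := hσ
    rw [dif_neg h2]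
    exact Prod.ext (funext fun i => h1 i) h0.symm
  · rw [if_neg h0] at hσ
    have hex : ∃ p' : (Fin M → Bool) × ℕ, 1 ≤ p'.2 ∧ p'.2 ≤ F + F - 1 ∧
        σ ∈ Qsmall M D xs p'.1 p'.2 := ⟨p, by omega, hp, hσ⟩
    rw [dif_pos hex]
    obtain ⟨hw, hj⟩ := qsmall_unique M D xs
      (le_trans hex.choose_spec.2.1 (by omega)) (le_trans hp (by omega))
      hex.choose_spec.2.2 hσ
    exact Prod.ext hw hj

lemma pieceP_disjoint (hD : F + F ≤ D) {p p' : (Fin M → Bool) × ℕ}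
    (hp : p.2 ≤ F + F - 1) (hp' : p'.2 ≤ F + F - 1) (hne : p ≠ p') :
    Disjoint (PieceP M D F xs p) (PieceP M D F xs p') := by
  rw [Set.disjoint_left]
  intro σ hσ hσ'
  have h1 := classifyP_eq_of_mem M D F xs hD hp hσ
  have h2 := classifyP_eq_of_mem M D F xs hD hp' hσ'
  exact hne (h1 ▸ h2 ▸ rfl)

lemma pieceP_nonempty (hF : 0 < F) {p : (Fin M → Bool) × ℕ} :
    (PieceP M D F xs p).Nonempty := by
  rw [PieceP]
  split_ifs with h0
  · refine ⟨fun i => if h : i < M then p.1 ⟨i, h⟩ else false, fun i => by simp, ?_⟩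
    rintro ⟨p', h1, h2, h3⟩
    have := h3.2.1
    simp at this
  · exact ⟨ptQ M D xs p.1 p.2 false, mem_ptQ M D xs p.1 p.2 false⟩

lemma qsmall_dep {σ τ : ℕ → Bool} {w : Fin M → Bool} {j : ℕ}
    (hagree : ∀ i < M + 1 + M + D, σ i = τ i) (h : σ ∈ Qsmall M D xs w j) :
    τ ∈ Qsmall M D xs w j := by
  obtain ⟨h1, h2, h3, h4⟩ := h
  refine ⟨fun i hi => by rw [← hagree i (by omega)]; exact h1 i hi,
    by rw [← hagree M (by omega)]; exact h2,
    fun i => by rw [← hagree (M + 1 + i.val) (by omega)]; exact h3 i,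
    fun t ht => by rw [← hagree (M + 1 + M + t) (by omega)]; exact h4 t ht⟩

lemma classifyP_dep (hD : F + F ≤ D) {σ τ : ℕ → Bool}
    (hagree : ∀ i < M + 1 + M + D, σ i = τ i) :
    classifyP M D F xs σ = classifyP M D F xs τ := by
  by_cases h : ∃ p : (Fin M → Bool) × ℕ, 1 ≤ p.2 ∧ p.2 ≤ F + F - 1 ∧ σ ∈ Qsmall M D xs p.1 p.2
  · obtain ⟨p, h1, h2, h3⟩ := h
    have hσ : classifyP M D F xs σ = p :=
      classifyP_eq_of_mem M D F xs hD h2 (by rw [PieceP, if_neg (by omega)]; exact h3)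
    have hτ : classifyP M D F xs τ = p :=
      classifyP_eq_of_mem M D F xs hD h2
        (by rw [PieceP, if_neg (by omega)]; exact qsmall_dep M D xs hagree h3)
    rw [hσ, hτ]
  · have h' : ¬ ∃ p : (Fin M → Bool) × ℕ, 1 ≤ p.2 ∧ p.2 ≤ F + F - 1 ∧
        τ ∈ Qsmall M D xs p.1 p.2 := by
      rintro ⟨p, h1, h2, h3⟩
      exact h ⟨p, h1, h2, qsmall_dep M D xs (fun i hi => (hagree i hi).symm) h3⟩
    rw [classifyP, classifyP, dif_neg h, dif_neg h']
    refine Prod.ext (funext fun i => ?_) rfl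
    exact hagree i.val (by omega)

lemma gmap_dep (hD : F + F ≤ D) {σ τ : ℕ → Bool}
    (hagree : ∀ i < M + 1 + M + D, σ i = τ i) :
    gmap M D F xs σ = gmap M D F xs τ := by
  rw [gmap, gmap, classifyP_dep M D F xs hD hagree]

lemma gmap_eq_of_mem (hD : F + F ≤ D) {σ : ℕ → Bool} {p : (Fin M → Bool) × ℕ}
    (hp : p.2 ≤ F + F - 1) (hσ : σ ∈ PieceP M D F xs p) :
    gmap M D F xs σ = ptQ M D xs p.1 (succIdx F p.2) false := by
  rw [gmap, classifyP_eq_of_mem M D F xs hD hp hσ]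

lemma succIdx_mem (hF : 0 < F) {j : ℕ} (hj : j ≤ F + F - 1) :
    1 ≤ succIdx F j ∧ succIdx F j ≤ F + F - 1 := by
  rw [succIdx]
  split_ifs with h
  · omega
  · omega

lemma gmap_image (hD : F + F ≤ D) (hF : 0 < F) {p : (Fin M → Bool) × ℕ}
    (hp : p.2 ≤ F + F - 1) :
    gmap M D F xs '' PieceP M D F xs p = {ptQ M D xs p.1 (succIdx F p.2) false} := by
  apply Set.Subset.antisymm
  · rintro y ⟨σ, hσ, rfl⟩
    rw [gmap_eq_of_mem M D F xs hD hp hσ]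
    rfl
  · rintro y rfl
    obtain ⟨σ, hσ⟩ := pieceP_nonempty M D F xs hF (p := p)
    exact ⟨σ, hσ, gmap_eq_of_mem M D F xs hD hp hσ⟩

end DensityConstruction2

lemma orbit_periodic (M : ℕ) (T : (ℕ → Bool) → (ℕ → Bool))
    (hT : ∀ u v : ℕ → Bool, (∀ i < M, u i = v i) → T u = T v) (x0 : ℕ → Bool) :
    ∀ r a, 2 ^ M ≤ a → T^[a + r * Nat.factorial (2 ^ M)] x0 = T^[a] x0 := by
  classical
  set S := 2 ^ M with hS
  have hcard : Fintype.card (Fin M → Bool) < Fintype.card (Fin (S + 1)) := by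
    rw [Fintype.card_fin, Fintype.card_fun]
    simp [hS]
  obtain ⟨t₀, t₁, hne, heq⟩ := Fintype.exists_ne_map_eq_of_card_lt
    (fun t : Fin (S + 1) => (fun i : Fin M => (T^[t.val] x0) i.val)) hcard
  -- wlog t₀ < t₁
  have key : ∃ t t' : ℕ, t < t' ∧ t' ≤ S ∧
      (∀ i : Fin M, (T^[t] x0) i.val = (T^[t'] x0) i.val) := by
    rcases Nat.lt_or_ge t₀.val t₁.val with h | h
    · exact ⟨t₀.val, t₁.val, h, Nat.le_of_lt_succ t₁.isLt, fun i => congrFun heq i⟩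
    · have h' : t₁.val < t₀.val := by
        rcases Nat.lt_or_ge t₁.val t₀.val with h' | h'
        · exact h'
        · exact absurd (Fin.ext (le_antisymm h' h)) hne
      exact ⟨t₁.val, t₀.val, h', Nat.le_of_lt_succ t₀.isLt, fun i => (congrFun heq i).symm⟩
  obtain ⟨t, t', htt, ht'S, hagree⟩ := key
  have hstep : T^[t + 1] x0 = T^[t' + 1] x0 := by
    rw [Function.iterate_succ_apply', Function.iterate_succ_apply']
    exact hT _ _ (fun i hi => hagree ⟨i, hi⟩)
  have hshift : ∀ d, T^[t + 1 + d] x0 = T^[t' + 1 + d] x0 := by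
    intro d
    induction d with
    | zero => exact hstep
    | succ d ih =>
      have e1 : t + 1 + (d + 1) = (t + 1 + d) + 1 := by omega
      have e2 : t' + 1 + (d + 1) = (t' + 1 + d) + 1 := by omega
      rw [e1, e2, Function.iterate_succ_apply', Function.iterate_succ_apply', ih]
  set c := t' - t with hc
  have hc1 : 1 ≤ c := by omega
  have hper : ∀ a, t + 1 ≤ a → T^[a + c] x0 = T^[a] x0 := by
    intro a ha
    have e1 : a + c = t' + 1 + (a - (t + 1)) := by omega
    have e2 : a = t + 1 + (a - (t + 1)) := by omega
    rw [e1]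
    have h3 := hshift (a - (t + 1))
    rw [← e2] at h3
    exact h3.symm
  have hmul : ∀ r a, t + 1 ≤ a → T^[a + r * c] x0 = T^[a] x0 := by
    intro r
    induction r with
    | zero => intro a _; simp
    | succ r ih =>
      intro a ha
      have e1 : a + (r + 1) * c = (a + r * c) + c := by ring
      rw [e1, hper (a + r * c) (by omega), ih a ha]
  intro r a haS
  have hcS : c ∣ Nat.factorial S := Nat.dvd_factorial (by omega) (by omega)
  obtain ⟨u, hu⟩ := hcS
  have e1 : a + r * Nat.factorial S = a + (r * u) * c := by
    rw [hu]; ring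
  rw [e1]
  exact hmul (r * u) a (by omega)

theorem dense_part (m : ℕ) (hm : 0 < m) (f : (ℕ → Bool) → (ℕ → Bool)) (hf : Continuous f)
    (ε : ℝ) (hε : 0 < ε) :
    ∃ g : (ℕ → Bool) → (ℕ → Bool), Continuous g ∧ StrictBalloonsProp m g ∧
      ∀ σ, cantorDist (g σ) (f σ) < ε := by
  classical
  obtain ⟨N, hN⟩ := exists_nat_one_div_lt hε
  -- uniform continuity data
  have hkey : ∀ i : ℕ, ∃ n, ∀ σ τ : ℕ → Bool, (∀ t < n, σ t = τ t) → f σ i = f τ i := by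
    intro i
    have hci : Continuous fun σ : ℕ → Bool => f σ i := (continuous_apply i).comp hf
    have hA : IsClopen {σ : ℕ → Bool | f σ i = true} := by
      have : {σ : ℕ → Bool | f σ i = true} = (fun σ : ℕ → Bool => f σ i) ⁻¹' {true} := by
        ext σ; simp
      rw [this]
      exact (isClopen_discrete _).preimage hci
    obtain ⟨n1, hn1⟩ := exists_stable_of_isClopen hA
    obtain ⟨n2, hn2⟩ := exists_stable_of_isClopen hA.compl
    refine ⟨max n1 n2, fun σ τ hst => ?_⟩
    cases hb : f σ i with
    | true =>
      have := hn1 σ hb τ (fun t ht => hst t (lt_of_lt_of_le ht (le_max_left _ _)))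
      rw [Set.mem_setOf_eq] at this
      rw [this]
    | false =>
      have hσc : σ ∈ {σ : ℕ → Bool | f σ i = true}ᶜ := by simp [hb]
      have := hn2 σ hσc τ (fun t ht => hst t (lt_of_lt_of_le ht (le_max_right _ _)))
      simp only [Set.mem_compl_iff, Set.mem_setOf_eq, Bool.not_eq_true] at this
      rw [this]
  choose nn hnn using hkey
  set M : ℕ := (m ⊔ N) ⊔ (Finset.range N).sup nn with hM
  have hmM : m ≤ M := le_trans le_sup_left le_sup_left
  have hNM : N ≤ M := le_trans le_sup_right le_sup_left
  have huc : ∀ σ τ : ℕ → Bool, (∀ t < M, σ t = τ t) → ∀ i < N, f σ i = f τ i := by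
    intro σ τ h i hi
    refine hnn i σ τ (fun t ht => h t (lt_of_lt_of_le ht ?_))
    exact le_trans (Finset.le_sup (Finset.mem_range.mpr hi)) le_sup_right
  set S : ℕ := 2 ^ M with hS
  have hS1 : 1 ≤ S := Nat.one_le_two_pow
  set q : ℕ := m * S with hq'
  have hq : 0 < q := Nat.mul_pos hm (by omega)
  have hmq : m ∣ q := ⟨S, rfl⟩
  have hSq : S ≤ q := Nat.le_mul_of_pos_left S hm
  set F : ℕ := Nat.factorial q with hFdef
  have hF : 0 < F := Nat.factorial_pos q
  have hSF : S ≤ F := le_trans hSq (Nat.self_le_factorial q)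
  have hSfacF : Nat.factorial S ∣ F := Nat.factorial_dvd_factorial hSq
  set D : ℕ := F + F with hD'
  have hD : F + F ≤ D := le_refl _
  set K : ℕ := M + 1 + M + D with hK
  -- the step map and orbits
  set stepf : (ℕ → Bool) → (ℕ → Bool) := fun u i => if i < N then f u i else false with hstepf
  have hstepdep : ∀ u v : ℕ → Bool, (∀ i < M, u i = v i) → stepf u = stepf v := by
    intro u v h
    funext i
    by_cases hi : i < N
    · simp only [hstepf, if_pos hi]
      exact huc u v h i hi
    · simp only [hstepf, if_neg hi]
  set xs : (Fin M → Bool) → ℕ → (ℕ → Bool) :=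
    fun w j => stepf^[j] (fun i => if h : i < M then w ⟨i, h⟩ else false) with hxs
  have hxs0 : ∀ (w : Fin M → Bool) (i : ℕ) (h : i < M), xs w 0 i = w ⟨i, h⟩ := by
    intro w i h
    simp [hxs, h]
  have hstep : ∀ (w : Fin M → Bool) (j : ℕ), ∀ i < N, xs w (j + 1) i = f (xs w j) i := by
    intro w j i hi
    show stepf^[j + 1] _ i = _
    rw [Function.iterate_succ_apply']
    simp only [hstepf, if_pos hi]
    rfl
  have hper : ∀ w : Fin M → Bool, xs w (F + F) = xs w F := by
    intro w
    obtain ⟨u, hu⟩ := hSfacF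
    have := orbit_periodic M stepf hstepdep
      (fun i => if h : i < M then w ⟨i, h⟩ else false) u F hSF
    have e1 : F + F = F + u * Nat.factorial S := by rw [hu]; ring
    rw [e1]
    exact this
  -- the partition
  set P : Finset (Set (ℕ → Bool)) :=
    Finset.image (fun p : (Fin M → Bool) × Fin (F + F) => PieceP M D F xs (p.1, p.2.val))
      Finset.univ with hP
  have hvalid : ∀ p : (Fin M → Bool) × Fin (F + F), p.2.val ≤ F + F - 1 := by
    intro p
    have := p.2.isLt
    omega
  have hmemP : ∀ p : (Fin M → Bool) × Fin (F + F), PieceP M D F xs (p.1, p.2.val) ∈ P :=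
    fun p => Finset.mem_image_of_mem _ (Finset.mem_univ p)
  have hinj : ∀ p p' : (Fin M → Bool) × Fin (F + F),
      PieceP M D F xs (p.1, p.2.val) = PieceP M D F xs (p'.1, p'.2.val) → p = p' := by
    intro p p' h
    by_contra hne
    have hne' : (p.1, p.2.val) ≠ (p'.1, p'.2.val) := by
      intro hpp
      rw [Prod.ext_iff] at hpp
      exact hne (Prod.ext hpp.1 (Fin.ext hpp.2))
    have hdisj := pieceP_disjoint M D F xs hD (hvalid p) (hvalid p') hne'
    obtain ⟨σ, hσ⟩ := pieceP_nonempty M D F xs hF (p := (p.1, p.2.val))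
    exact Set.disjoint_left.mp hdisj hσ (h ▸ hσ)
  -- pieces only depend on first K coordinates
  have hpiecedep : ∀ (p : (Fin M → Bool) × ℕ), p.2 ≤ F + F - 1 →
      ∀ σ τ : ℕ → Bool, (∀ i < K, σ i = τ i) →
      σ ∈ PieceP M D F xs p → τ ∈ PieceP M D F xs p := by
    intro p hp σ τ hagree hσ
    have h1 := classifyP_eq_of_mem M D F xs hD hp hσ
    have h2 := classifyP_dep M D F xs hD (σ := σ) (τ := τ) hagree
    have h3 := mem_classifyP M D F xs τ
    rw [← h2, h1] at h3
    exact h3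
  have hpieceM : ∀ (p : (Fin M → Bool) × ℕ), p.2 ≤ F + F - 1 →
      ∀ σ ∈ PieceP M D F xs p, ∀ τ ∈ PieceP M D F xs p, ∀ i < M, σ i = τ i := by
    intro p hp σ hσ τ hτ i hi
    rw [PieceP] at hσ hτ
    by_cases h0 : p.2 = 0
    · rw [if_pos h0] at hσ hτ
      rw [hσ.1 ⟨i, hi⟩, hτ.1 ⟨i, hi⟩]
    · rw [if_neg h0] at hσ hτ
      rw [hσ.1 i hi, hτ.1 i hi]
  have hPart : IsPartition P := by
    refine ⟨?_, ?_, ?_⟩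
    · intro a ha
      rw [hP, Finset.mem_image] at ha
      obtain ⟨p, -, rfl⟩ := ha
      constructor
      · exact isClopen_of_dep K _ (fun σ τ h hσ => hpiecedep _ (hvalid p) σ τ h hσ)
      · exact pieceP_nonempty M D F xs hF
    · intro a ha b hb hab
      rw [hP, Finset.mem_image] at ha hb
      obtain ⟨p, -, rfl⟩ := ha
      obtain ⟨p', -, rfl⟩ := hb
      refine pieceP_disjoint M D F xs hD (hvalid p) (hvalid p') ?_
      intro hpp
      exact hab (by rw [hpp])
    · rw [Set.eq_univ_iff_forall]
      intro σ
      have hmem := mem_classifyP M D F xs σ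
      have hle := classifyP_le M D F xs σ
      refine ⟨PieceP M D F xs (classifyP M D F xs σ), ?_, hmem⟩
      rw [Finset.mem_coe, hP, Finset.mem_image]
      refine ⟨((classifyP M D F xs σ).1, ⟨(classifyP M D F xs σ).2, by omega⟩),
        Finset.mem_univ _, ?_⟩
      simp
  have hmesh : mesh (↑P : Set (Set (ℕ → Bool))) < 1 / (m : ℝ) := by
    have h1 : mesh (↑P : Set (Set (ℕ → Bool))) ≤ 1 / (M + 1 : ℝ) := by
      refine mesh_le ?_
      intro a ha
      rw [hP, Finset.mem_image] at ha
      obtain ⟨p, -, rfl⟩ := ha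
      exact hpieceM _ (hvalid p)
    refine lt_of_le_of_lt h1 ?_
    have hcast : (m : ℝ) ≤ M := by exact_mod_cast hmM
    have hm0 : (0 : ℝ) < m := by exact_mod_cast hm
    rw [div_lt_div_iff₀ (by positivity) hm0]
    linarith
  -- the map g
  set g : (ℕ → Bool) → (ℕ → Bool) := gmap M D F xs with hg
  have hgcont : Continuous g := by
    refine continuous_of_dep K g ?_
    intro σ τ h
    exact gmap_dep M D F xs hD h
  have hgagree : ∀ σ : ℕ → Bool, ∀ i < N, g σ i = f σ i := by
    intro σ i hi
    have hiM : i < M := lt_of_lt_of_le hi hNM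
    have hmem := mem_classifyP M D F xs σ
    set p := classifyP M D F xs σ with hp
    have hgv : g σ i = xs p.1 (succIdx F p.2) i := by
      rw [hg, gmap]
      simp only [← hp]
      rw [ptQ, dif_pos hiM]
    rw [hgv]
    rw [PieceP] at hmem
    by_cases h0 : p.2 = 0
    · rw [if_pos h0] at hmem
      have hsucc : succIdx F p.2 = 1 := by
        rw [h0, succIdx]
        rw [if_neg (by omega)]
      rw [hsucc, hstep p.1 0 i hi]
      refine huc _ _ ?_ i hi
      intro t ht
      rw [hxs0 p.1 t ht]
      exact (hmem.1 ⟨t, ht⟩).symm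
    · rw [if_neg h0] at hmem
      have hagr : ∀ t < M, xs p.1 p.2 t = σ t := fun t ht => (hmem.1 t ht).symm
      by_cases htop : p.2 = F + F - 1
      · have hsucc : succIdx F p.2 = F := by rw [succIdx, if_pos htop]
        rw [hsucc]
        have h2 : xs p.1 F i = xs p.1 (F + F) i := by rw [hper]
        have h3 : F + F = (F + F - 1) + 1 := by omega
        rw [h2, h3, hstep p.1 (F + F - 1) i hi, ← htop]
        exact huc _ _ hagr i hi
      · have hsucc : succIdx F p.2 = p.2 + 1 := by rw [succIdx, if_neg htop]
        rw [hsucc, hstep p.1 p.2 i hi]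
        exact huc _ _ hagr i hi
  have hgdist : ∀ σ, cantorDist (g σ) (f σ) < ε := by
    intro σ
    refine lt_of_le_of_lt (cantorDist_le_of_agree (fun i hi => hgagree σ i hi)) hN
  -- the equivalence
  set k : ℕ := Fintype.card (Fin M → Bool) with hk
  set eqW : (Fin M → Bool) ≃ Fin k := Fintype.equivFin (Fin M → Bool) with heqW
  have hbij : Function.Bijective (fun p : Fin k × Fin (F + F) =>
      (⟨PieceP M D F xs (eqW.symm p.1, p.2.val), hmemP (eqW.symm p.1, p.2)⟩ :
        {a // a ∈ P})) := by
    constructor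
    · intro p p' hpp
      have h1 : PieceP M D F xs (eqW.symm p.1, p.2.val) =
          PieceP M D F xs (eqW.symm p'.1, p'.2.val) := congrArg Subtype.val hpp
      have h2 := hinj (eqW.symm p.1, p.2) (eqW.symm p'.1, p'.2) h1
      rw [Prod.ext_iff] at h2
      exact Prod.ext (eqW.symm.injective.eq_iff.mp h2.1) h2.2
    · rintro ⟨a, ha⟩
      rw [hP, Finset.mem_image] at ha
      obtain ⟨p, -, rfl⟩ := ha
      refine ⟨(eqW p.1, p.2), ?_⟩
      apply Subtype.ext
      simp
  set e : {a // a ∈ P} ≃ Fin k × Fin (F + F) := (Equiv.ofBijective _ hbij).symm with he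
  have hesymm : ∀ X : Fin k × Fin (F + F),
      (e.symm X).val = PieceP M D F xs (eqW.symm X.1, X.2.val) := fun X => rfl
  -- edges
  have himg : ∀ (w : Fin M → Bool) (j : ℕ), j ≤ F + F - 1 →
      g '' PieceP M D F xs (w, j) = {ptQ M D xs w (succIdx F j) false} :=
    fun w j hj => gmap_image M D F xs hD hF hj
  have hptmem : ∀ (w : Fin M → Bool) (j : ℕ) (b : Bool), 1 ≤ j → j ≤ F + F - 1 →
      ptQ M D xs w j b ∈ PieceP M D F xs (w, j) := by
    intro w j b hj1 hj2
    rw [PieceP, if_neg (by omega)]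
    exact mem_ptQ M D xs w j b
  have hedgeiff : ∀ (wa wb : Fin M → Bool) (ja jb : ℕ), ja ≤ F + F - 1 → jb ≤ F + F - 1 →
      (gammaEdge g (PieceP M D F xs (wa, ja)) (PieceP M D F xs (wb, jb)) ↔
        (wb = wa ∧ jb = succIdx F ja)) := by
    intro wa wb ja jb hja hjb
    constructor
    · rintro ⟨y, hy1, hy2⟩
      rw [himg wa ja hja] at hy1
      rw [Set.mem_singleton_iff] at hy1
      subst hy1
      obtain ⟨hs1, hs2⟩ := succIdx_mem F hF hja
      have hy3 := hptmem wa (succIdx F ja) false hs1 hs2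
      have c1 := classifyP_eq_of_mem M D F xs hD hjb hy2
      have c2 := classifyP_eq_of_mem M D F xs hD (p := (wa, succIdx F ja)) hs2 hy3
      rw [c1] at c2
      rw [Prod.ext_iff] at c2
      exact ⟨c2.1, c2.2⟩
    · rintro ⟨rfl, rfl⟩
      obtain ⟨hs1, hs2⟩ := succIdx_mem F hF hja
      refine ⟨ptQ M D xs wb (succIdx F ja) false, ?_, hptmem wb _ false hs1 hs2⟩
      rw [himg wb ja hja]
      rfl
  have hballoon : ∀ (ja jb : Fin (F + F)),
      ((jb.val = succIdx F ja.val) ↔ balloonEdge F F ja jb) := by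
    intro ja jb
    have hja := ja.isLt
    have hjb := jb.isLt
    rw [succIdx, balloonEdge]
    split_ifs with h
    · omega
    · omega
  refine ⟨g, hgcont, ⟨P, hPart, hmesh, q, hq, hmq, k, e, ?_, ?_⟩, hgdist⟩
  · intro a b
    obtain ⟨pa, rfl⟩ : ∃ pa, e.symm pa = a := ⟨e a, e.symm_apply_apply a⟩
    obtain ⟨pb, rfl⟩ : ∃ pb, e.symm pb = b := ⟨e b, e.symm_apply_apply b⟩
    rw [e.apply_symm_apply, e.apply_symm_apply, hesymm, hesymm]
    rw [hedgeiff _ _ _ _ (hvalid (eqW.symm pa.1, pa.2)) (hvalid (eqW.symm pb.1, pb.2))]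
    rw [← hballoon pa.2 pb.2]
    constructor
    · rintro ⟨h1, h2⟩
      exact ⟨(eqW.symm.injective h1.symm), h2⟩
    · rintro ⟨h1, h2⟩
      exact ⟨congrArg eqW.symm h1.symm, h2⟩
  · intro i
    constructor
    · intro j hj hne
      rw [hesymm, hesymm]
      have hjv : j ≤ F + F - 1 := by omega
      rw [himg _ j hjv]
      have hsucc : succIdx F j = j + 1 := by
        rw [succIdx, if_neg (by omega)]
      rw [hsucc]
      have hsub : {ptQ M D xs (eqW.symm i) (j + 1) false} ⊆
          PieceP M D F xs (eqW.symm i, j + 1) :=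
        Set.singleton_subset_iff.mpr (hptmem _ _ false (by omega) (by omega))
      refine (Set.ssubset_iff_of_subset hsub).mpr ?_
      refine ⟨ptQ M D xs (eqW.symm i) (j + 1) true, hptmem _ _ true (by omega) (by omega), ?_⟩
      rw [Set.mem_singleton_iff]
      exact fun h => ptQ_ne M D xs (eqW.symm i) (j + 1) h.symm
    · rw [hesymm, hesymm, hesymm]
      rw [himg _ (F - 1) (by omega), himg _ (F + F - 1) (by omega)]
      have hs1 : succIdx F (F - 1) = F := by
        rw [succIdx]
        split_ifs with h
        · rfl
        · omega
      have hs2 : succIdx F (F + F - 1) = F := by rw [succIdx, if_pos rfl]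
      rw [hs1, hs2, Set.union_self]
      have hsub : {ptQ M D xs (eqW.symm i) F false} ⊆ PieceP M D F xs (eqW.symm i, F) :=
        Set.singleton_subset_iff.mpr (hptmem _ _ false (by omega) (by omega))
      refine (Set.ssubset_iff_of_subset hsub).mpr ?_
      refine ⟨ptQ M D xs (eqW.symm i) F true, hptmem _ _ true (by omega) (by omega), ?_⟩
      rw [Set.mem_singleton_iff]
      exact fun h => ptQ_ne M D xs (eqW.symm i) F h.symm

theorem Tm_open_and_dense (m : ℕ) (hm : 0 < m) :
    (∀ f : (ℕ → Bool) → (ℕ → Bool), Continuous f → StrictBalloonsProp m f →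
      ∃ ε : ℝ, 0 < ε ∧ ∀ g : (ℕ → Bool) → (ℕ → Bool), Continuous g →
        (∀ σ, cantorDist (g σ) (f σ) < ε) → StrictBalloonsProp m g) ∧
    (∀ f : (ℕ → Bool) → (ℕ → Bool), Continuous f → ∀ ε : ℝ, 0 < ε →
      ∃ g : (ℕ → Bool) → (ℕ → Bool), Continuous g ∧ StrictBalloonsProp m g ∧
        ∀ σ, cantorDist (g σ) (f σ) < ε) := by
  constructor
  · intro f hf h
    exact open_part m f hf h
  · intro f hf ε hε
    exact dense_part m hm f hf ε hε
end

section
/- Let f be a continuous self-map of a compact metric space X that is chain continuous at every point. Then every chain recurrent point of f is recurrent; hence R(f) = Ω(f) = CR(f). -/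
/-- `x` is a recurrent point of `f`: `x ∈ ω(x,f)`. -/
def RecurrentPt {X : Type*} [MetricSpace X] (f : X → X) (x : X) : Prop :=
  ∀ ε : ℝ, 0 < ε → ∀ N : ℕ, ∃ n : ℕ, N ≤ n ∧ dist (f^[n] x) x < ε

/-- `x` is a nonwandering point of `f`. -/
def NonwanderingPt {X : Type*} [MetricSpace X] (f : X → X) (x : X) : Prop :=
  ∀ ε : ℝ, 0 < ε → ∃ n : ℕ, 1 ≤ n ∧ ∃ y : X, dist y x < ε ∧ dist (f^[n] y) x < ε

/-- `x` is a chain recurrent point of `f`. -/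
def ChainRecurrentPt {X : Type*} [MetricSpace X] (f : X → X) (x : X) : Prop :=
  ∀ δ : ℝ, 0 < δ → ∃ k : ℕ, 1 ≤ k ∧ ∃ c : ℕ → X, c 0 = x ∧ c k = x ∧
    ∀ i < k, dist (f (c i)) (c (i + 1)) ≤ δ

/-- `f` is chain continuous at `x`. -/
def ChainContinuousAt {X : Type*} [MetricSpace X] (f : X → X) (x : X) : Prop :=
  ∀ ε : ℝ, 0 < ε → ∃ δ : ℝ, 0 < δ ∧
    ∀ xs : ℕ → X, dist (xs 0) x < δ → (∀ n : ℕ, dist (xs (n + 1)) (f (xs n)) < δ) →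
      ∀ n : ℕ, dist (xs n) (f^[n] x) < ε

private lemma cr_to_r {X : Type*} [MetricSpace X] (f : X → X)
    (x : X) (hccx : ChainContinuousAt f x) (hx : ChainRecurrentPt f x) :
    RecurrentPt f x := by
  intro ε hε N
  obtain ⟨δ, hδ, hδ'⟩ := hccx ε hε
  obtain ⟨k, hk, c, hc0, hck, hchain⟩ := hx (δ/2) (by linarith)
  have hkpos : 0 < k := hk
  set xs : ℕ → X := fun n => c (n % k) with hxs
  have h0 : xs 0 = x := by simp [hxs, hc0]
  have hstep : ∀ n, dist (xs (n+1)) (f (xs n)) < δ := by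
    intro n
    have hmod : n % k < k := Nat.mod_lt n hkpos
    have key : xs (n+1) = c (n % k + 1) := by
      have h1 : (n + 1) % k = (n % k + 1) % k := (Nat.mod_add_mod n k 1).symm
      by_cases h : n % k + 1 = k
      · have : (n + 1) % k = 0 := by rw [h1, h, Nat.mod_self]
        simp only [hxs, this, hc0]
        rw [h, hck]
      · have hlt : n % k + 1 < k := lt_of_le_of_ne hmod h
        simp only [hxs, h1, Nat.mod_eq_of_lt hlt]
    rw [key, dist_comm]
    calc dist (f (xs n)) (c (n % k + 1)) = dist (f (c (n % k))) (c (n % k + 1)) := rfl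
      _ ≤ δ/2 := hchain _ hmod
      _ < δ := by linarith
  have hall := hδ' xs (by rw [h0]; simpa using hδ) hstep
  refine ⟨N * k, Nat.le_mul_of_pos_right N hkpos, ?_⟩
  have := hall (N * k)
  have hx0 : xs (N * k) = x := by simp [hxs, Nat.mul_mod_left, hc0]
  rw [hx0] at this
  rw [dist_comm]
  exact this

private lemma r_to_nw {X : Type*} [MetricSpace X] (f : X → X)
    (x : X) (hx : RecurrentPt f x) : NonwanderingPt f x := by
  intro ε hε
  obtain ⟨n, hn, h⟩ := hx ε hε 1
  exact ⟨n, hn, x, by simpa using hε, h⟩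

private lemma nw_to_cr {X : Type*} [MetricSpace X] (f : X → X) (hf : Continuous f)
    (x : X) (hx : NonwanderingPt f x) : ChainRecurrentPt f x := by
  intro δ hδ
  obtain ⟨ε', hε', hcont⟩ := Metric.continuousAt_iff.mp hf.continuousAt (δ/2) (by linarith)
  set ε : ℝ := min ε' (δ/2) with hεdef
  have hεpos : 0 < ε := lt_min hε' (by linarith)
  obtain ⟨n, hn1, y, hyx, hfy⟩ := hx ε hεpos
  have hyx' : dist y x < ε' := lt_of_lt_of_le hyx (min_le_left _ _)
  have hfyfx : dist (f y) (f x) < δ/2 := hcont hyx'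
  have hfy' : dist (f^[n] y) x < δ/2 := lt_of_lt_of_le hfy (min_le_right _ _)
  refine ⟨n, hn1, fun i => if i = 0 ∨ n ≤ i then x else f^[i] y, by simp, by simp, ?_⟩
  intro i hi
  by_cases hi0 : i = 0
  · subst hi0
    simp only [true_or, if_true]
    by_cases hn2 : n ≤ 1
    · have hn1' : n = 1 := le_antisymm hn2 hn1
      have : (1 : ℕ) = 0 ∨ n ≤ 1 := Or.inr hn2
      simp only [if_pos this]
      calc dist (f x) x ≤ dist (f x) (f y) + dist (f y) x := dist_triangle _ _ _
        _ = dist (f y) (f x) + dist (f^[n] y) x := by rw [dist_comm, hn1']; simp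
        _ ≤ δ/2 + δ/2 := by linarith
        _ = δ := by ring
    · have : ¬((1 : ℕ) = 0 ∨ n ≤ 1) := by omega
      simp only [if_neg this]
      have : f^[1] y = f y := Function.iterate_one f ▸ rfl
      rw [this, dist_comm]
      linarith
  · have hni : ¬ (i = 0 ∨ n ≤ i) := by omega
    simp only [if_neg hni]
    by_cases hsucc : i + 1 = n
    · have : (i + 1 = 0 ∨ n ≤ i + 1) := Or.inr (le_of_eq hsucc.symm)
      simp only [if_pos this]
      rw [← Function.iterate_succ_apply' f i y]
      simp only [Nat.succ_eq_add_one, hsucc]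
      linarith
    · have : ¬ (i + 1 = 0 ∨ n ≤ i + 1) := by omega
      simp only [if_neg this]
      rw [← Function.iterate_succ_apply' f i y]
      simp [le_of_lt hδ]

theorem chain_continuous_implies_CR_eq_R {X : Type*} [MetricSpace X] [CompactSpace X]
    (f : X → X) (hf : Continuous f) (hcc : ∀ x : X, ChainContinuousAt f x) :
    (∀ x : X, ChainRecurrentPt f x → RecurrentPt f x) ∧
    {x : X | RecurrentPt f x} = {x : X | NonwanderingPt f x} ∧
    {x : X | NonwanderingPt f x} = {x : X | ChainRecurrentPt f x} := by
  have hCRR : ∀ x : X, ChainRecurrentPt f x → RecurrentPt f x :=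
    fun x hx => cr_to_r f x (hcc x) hx
  refine ⟨hCRR, ?_, ?_⟩
  · ext x
    constructor
    · exact fun hx => r_to_nw f x hx
    · exact fun hx => hCRR x (nw_to_cr f hf x hx)
  · ext x
    constructor
    · exact fun hx => nw_to_cr f hf x hx
    · exact fun hx => r_to_nw f x (hCRR x hx)
end
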